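/- arXiv:1609.06961 — 13 statements merged into one kernel-verified Lean document; each statement's English description precedes it below -/
import Mathlib

section
/- A graph G is localizable (its vertex set can be partitioned into strong cliques) if and only if its vertex set can be partitioned into exactly α(G) strong cliques, where α(G) is the independence number. -/
variable {V : Type*} [Fintype V] [DecidableEq V]

/-- `S` is an independent set in `G`. -/
def IsIndep (G : SimpleGraph V) (S : Finset V) : Prop :=
  ∀ ⦃u⦄, u ∈ S → ∀ ⦃v⦄, v ∈ S → ¬ G.Adj u v

/-- `S` is a maximal independent set in `G`. -/
def MaxIndep (G : SimpleGraph V) (S : Finset V) : Prop :=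
  IsIndep G S ∧ ∀ T, IsIndep G T → S ⊆ T → T = S

/-- `C` is a strong clique in `G`: a clique meeting every maximal independent set. -/
def IsStrongClique (G : SimpleGraph V) (C : Finset V) : Prop :=
  G.IsClique ↑C ∧ ∀ S, MaxIndep G S → (C ∩ S).Nonempty

/-- `G` is localizable: its vertex set partitions into strong cliques. -/
def Localizable (G : SimpleGraph V) : Prop :=
  ∃ (k : ℕ) (C : Fin k → Finset V), (∀ j, IsStrongClique G (C j)) ∧ ∀ v, ∃! j, v ∈ C j

/-- The independence number `α(G)`. -/
noncomputable def alpha (G : SimpleGraph V) : ℕ :=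
  sSup {n | ∃ S : Finset V, IsIndep G S ∧ S.card = n}

/-- The independent domination number `i(G)`. -/
noncomputable def indomNum (G : SimpleGraph V) : ℕ :=
  sInf {n | ∃ S : Finset V, MaxIndep G S ∧ S.card = n}

/-- The clique cover number `θ(G)`. -/
noncomputable def theta (G : SimpleGraph V) : ℕ :=
  sInf {n | ∃ C : Fin n → Finset V, (∀ j, G.IsClique ↑(C j)) ∧ ∀ v, ∃! j, v ∈ C j}

/-- `G` is well-covered: all maximal independent sets have the same size. -/
def WellCovered (G : SimpleGraph V) : Prop :=
  ∀ S T, MaxIndep G S → MaxIndep G T → S.card = T.card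

lemma exists_maxIndep_alpha (G : SimpleGraph V) :
    ∃ S : Finset V, MaxIndep G S ∧ S.card = alpha G := by
  have hbdd : BddAbove {n | ∃ S : Finset V, IsIndep G S ∧ S.card = n} := by
    refine ⟨Fintype.card V, ?_⟩
    rintro n ⟨S, -, rfl⟩
    exact Finset.card_le_univ S
  have hne : {n | ∃ S : Finset V, IsIndep G S ∧ S.card = n}.Nonempty :=
    ⟨0, ∅, by intro u hu; simp at hu, rfl⟩
  obtain ⟨S, hS, hcard⟩ := Nat.sSup_mem hne hbdd
  refine ⟨S, ⟨hS, ?_⟩, hcard⟩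
  intro T hT hsub
  have hle : T.card ≤ sSup {n | ∃ S : Finset V, IsIndep G S ∧ S.card = n} :=
    le_csSup hbdd ⟨T, hT, rfl⟩
  exact (Finset.eq_of_subset_of_card_le hsub (by omega)).symm

theorem localizable_iff_alpha_localizable (G : SimpleGraph V) :
    Localizable G ↔
      ∃ C : Fin (alpha G) → Finset V,
        (∀ j, IsStrongClique G (C j)) ∧ ∀ v, ∃! j, v ∈ C j := by
  constructor
  · rintro ⟨k, C, hC, hpart⟩
    obtain ⟨S, hS, hcard⟩ := exists_maxIndep_alpha G
    have hsing : ∀ j, ∃ v, v ∈ C j ∩ S ∧ ∀ w, w ∈ C j ∩ S → w = v := by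
      intro j
      obtain ⟨v, hv⟩ := (hC j).2 S hS
      refine ⟨v, hv, ?_⟩
      intro w hw
      by_contra hne
      have h1 := (hC j).1 (Finset.mem_coe.2 (Finset.mem_of_mem_inter_left hw))
        (Finset.mem_coe.2 (Finset.mem_of_mem_inter_left hv)) hne
      exact hS.1 (Finset.mem_of_mem_inter_right hw) (Finset.mem_of_mem_inter_right hv) h1
    choose f hf huniq using hsing
    have hkS : k = S.card := by
      have hbij : Function.Bijective
          (fun j : Fin k => (⟨f j, Finset.mem_of_mem_inter_right (hf j)⟩ : {x // x ∈ S})) := by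
        constructor
        · intro i j hij
          simp only [Subtype.mk.injEq] at hij
          have hi : f i ∈ C i := Finset.mem_of_mem_inter_left (hf i)
          have hj : f i ∈ C j := by
            rw [hij]; exact Finset.mem_of_mem_inter_left (hf j)
          obtain ⟨j0, hj0, hju⟩ := hpart (f i)
          rw [hju i hi, hju j hj]
        · rintro ⟨v, hv⟩
          obtain ⟨j, hj, -⟩ := hpart v
          refine ⟨j, ?_⟩
          have hmem : v ∈ C j ∩ S := Finset.mem_inter.2 ⟨hj, hv⟩
          have := huniq j v hmem
          simp [this]
      calc k = Fintype.card (Fin k) := (Fintype.card_fin k).symm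
        _ = Fintype.card {x // x ∈ S} := Fintype.card_of_bijective hbij
        _ = S.card := Fintype.card_coe S
    have hk : k = alpha G := hkS.trans hcard
    subst hk
    exact ⟨C, hC, hpart⟩
  · rintro ⟨C, hC, hpart⟩
    exact ⟨alpha G, C, hC, hpart⟩
end

section
/- A graph G is localizable if and only if G is well-covered and θ(G) = α(G), where θ(G) is the clique cover number and α(G) the independence number. -/
variable {V : Type*} [Fintype V] [DecidableEq V]

lemma indep_empty (G : SimpleGraph V) : IsIndep G (∅ : Finset V) := by
  intro u hu; simp at hu

lemma exists_maxIndep_superset (G : SimpleGraph V) (S : Finset V) (hS : IsIndep G S) :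
    ∃ T, MaxIndep G T ∧ S ⊆ T := by
  classical
  obtain ⟨T, hTmem, hTmax⟩ :=
    (Finset.univ.filter fun T : Finset V => IsIndep G T ∧ S ⊆ T).exists_max_image
      Finset.card ⟨S, by simp [hS]⟩
  simp only [Finset.mem_filter, Finset.mem_univ, true_and] at hTmem
  refine ⟨T, ⟨hTmem.1, fun T' hT' hsub => ?_⟩, hTmem.2⟩
  have hT'mem : T' ∈ Finset.univ.filter fun T : Finset V => IsIndep G T ∧ S ⊆ T := by
    simp [hT', hTmem.2.trans hsub]
  exact (Finset.eq_of_subset_of_card_le hsub (hTmax T' hT'mem)).symm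

lemma clique_inter_indep_card_le_one {G : SimpleGraph V} {C S : Finset V}
    (hC : G.IsClique ↑C) (hS : IsIndep G S) : (C ∩ S).card ≤ 1 := by
  rw [Finset.card_le_one]
  intro a ha b hb
  rw [Finset.mem_inter] at ha hb
  by_contra hne
  exact hS ha.2 hb.2 (hC (Finset.mem_coe.mpr ha.1) (Finset.mem_coe.mpr hb.1) hne)

lemma sum_inter_card {k : ℕ} (C : Fin k → Finset V)
    (hpart : ∀ v, ∃! j, v ∈ C j) (S : Finset V) :
    ∑ j, (C j ∩ S).card = S.card := by
  classical
  have h1 : ∀ j, (C j ∩ S).card = ∑ v ∈ S, if v ∈ C j then 1 else 0 := by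
    intro j
    rw [Finset.inter_comm, ← Finset.filter_mem_eq_inter, Finset.card_filter]
  simp only [h1]
  rw [Finset.sum_comm]
  have h2 : ∀ v ∈ S, (∑ j : Fin k, if v ∈ C j then 1 else 0) = 1 := by
    intro v _
    obtain ⟨j₀, hj₀, huniq⟩ := hpart v
    rw [← Finset.card_filter]
    rw [Finset.card_eq_one]
    refine ⟨j₀, ?_⟩
    ext j
    simp only [Finset.mem_filter, Finset.mem_univ, true_and, Finset.mem_singleton]
    exact ⟨fun h => huniq j h, fun h => h ▸ hj₀⟩
  rw [Finset.sum_congr rfl h2, Finset.sum_const, smul_eq_mul, mul_one]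

lemma alpha_spec (G : SimpleGraph V) :
    (∃ S, IsIndep G S ∧ S.card = alpha G) ∧ ∀ S, IsIndep G S → S.card ≤ alpha G := by
  classical
  have hne : {n | ∃ S : Finset V, IsIndep G S ∧ S.card = n}.Nonempty :=
    ⟨0, ∅, indep_empty G, rfl⟩
  have hbdd : BddAbove {n | ∃ S : Finset V, IsIndep G S ∧ S.card = n} := by
    refine ⟨Fintype.card V, ?_⟩
    rintro n ⟨S, _, rfl⟩
    exact Finset.card_le_univ S
  exact ⟨Nat.sSup_mem hne hbdd, fun S hS => le_csSup hbdd ⟨S, hS, rfl⟩⟩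

lemma indep_card_le {G : SimpleGraph V} {k : ℕ} (C : Fin k → Finset V)
    (hcl : ∀ j, G.IsClique ↑(C j)) (hpart : ∀ v, ∃! j, v ∈ C j)
    (S : Finset V) (hS : IsIndep G S) : S.card ≤ k := by
  rw [← sum_inter_card C hpart S]
  calc ∑ j, (C j ∩ S).card ≤ ∑ _j : Fin k, 1 :=
        Finset.sum_le_sum fun j _ => clique_inter_indep_card_le_one (hcl j) hS
    _ = k := by simp

lemma theta_set_nonempty (G : SimpleGraph V) :
    {n | ∃ C : Fin n → Finset V, (∀ j, G.IsClique ↑(C j)) ∧ ∀ v, ∃! j, v ∈ C j}.Nonempty := by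
  classical
  refine ⟨Fintype.card V, fun j => {(Fintype.equivFin V).symm j}, fun j => ?_, fun v => ?_⟩
  · simp [SimpleGraph.isClique_singleton]
  · refine ⟨Fintype.equivFin V v, by simp, fun j hj => ?_⟩
    simp only [Finset.mem_singleton] at hj
    rw [hj]
    simp

theorem localizable_iff_wellCovered_and_semiPerfect (G : SimpleGraph V) :
    Localizable G ↔ WellCovered G ∧ theta G = alpha G := by
  classical
  obtain ⟨⟨S₀, hS₀i, hS₀c⟩, hub⟩ := alpha_spec G
  -- a maximal independent set of size alpha G exists
  obtain ⟨T₀, hT₀, hsub₀⟩ := exists_maxIndep_superset G S₀ hS₀i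
  have hT₀c : T₀.card = alpha G :=
    le_antisymm (hub T₀ hT₀.1) (hS₀c ▸ Finset.card_le_card hsub₀)
  -- an optimal clique cover exists
  obtain ⟨D, hDcl, hDpart⟩ := Nat.sInf_mem (theta_set_nonempty G)
  have halpha_le_theta : alpha G ≤ theta G := by
    rw [← hS₀c]; exact indep_card_le D hDcl hDpart S₀ hS₀i
  constructor
  · rintro ⟨k, C, hstrong, hpart⟩
    have hcard : ∀ S, MaxIndep G S → S.card = k := by
      intro S hS
      rw [← sum_inter_card C hpart S]
      have : ∀ j ∈ (Finset.univ : Finset (Fin k)), (C j ∩ S).card = 1 := by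
        intro j _
        have h1 := clique_inter_indep_card_le_one (hstrong j).1 hS.1
        have h2 := Finset.card_pos.mpr ((hstrong j).2 S hS)
        omega
      rw [Finset.sum_congr rfl this, Finset.sum_const, smul_eq_mul, mul_one,
        Finset.card_univ, Fintype.card_fin]
    refine ⟨fun S T hS hT => (hcard S hS).trans (hcard T hT).symm, ?_⟩
    have hk : k = alpha G := by rw [← hT₀c, hcard T₀ hT₀]
    have htheta_le : theta G ≤ k :=
      Nat.sInf_le ⟨C, fun j => (hstrong j).1, hpart⟩
    omega
  · rintro ⟨hwc, hθα⟩
    refine ⟨theta G, D, fun j => ⟨hDcl j, ?_⟩, hDpart⟩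
    intro S hS
    have hSc : S.card = theta G := by
      rw [hwc S T₀ hS hT₀, hT₀c, hθα]
    have hsum : ∑ j, (D j ∩ S).card = ∑ _j : Fin (theta G), 1 := by
      rw [sum_inter_card D hDpart S, hSc]
      simp
    have hone := (Finset.sum_eq_sum_iff_of_le
      (fun j _ => clique_inter_indep_card_le_one (hDcl j) hS.1)).mp hsum
    exact Finset.card_pos.mp (by rw [hone j (Finset.mem_univ j)]; norm_num)
end

section
/- A graph G is localizable if and only if i(G) = θ(G), where i(G) is the minimum size of a maximal independent set and θ(G) is the clique cover number. -/
variable {V : Type*} [Fintype V] [DecidableEq V]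

open Finset in
lemma exists_maxIndep (G : SimpleGraph V) : ∃ S, MaxIndep G S := by
  classical
  obtain ⟨S, hS, hmax⟩ := Finset.exists_max_image
    (Finset.univ.powerset.filter fun S => IsIndep G S) Finset.card
    ⟨∅, by simp [IsIndep]⟩
  refine ⟨S, (Finset.mem_filter.mp hS).2, fun T hT hsub => ?_⟩
  have hTmem : T ∈ Finset.univ.powerset.filter fun S => IsIndep G S :=
    Finset.mem_filter.mpr ⟨Finset.mem_powerset.mpr (Finset.subset_univ T), hT⟩
  exact (Finset.eq_of_subset_of_card_le hsub (hmax T hTmem)).symm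

omit [Fintype V] in
lemma inter_card_le_one (G : SimpleGraph V) {C S : Finset V}
    (hC : G.IsClique ↑C) (hS : IsIndep G S) : (S ∩ C).card ≤ 1 := by
  rw [Finset.card_le_one]
  intro a ha b hb
  simp only [Finset.mem_inter] at ha hb
  by_contra hne
  exact hS ha.1 hb.1 (hC ha.2 hb.2 hne)

lemma card_eq_sum_inter {k : ℕ} {C : Fin k → Finset V}
    (hpart : ∀ v : V, ∃! j, v ∈ C j) (S : Finset V) :
    S.card = ∑ j, (S ∩ C j).card := by
  classical
  rw [Finset.card_eq_sum_card_fiberwise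
    (f := fun v => (hpart v).choose) (t := Finset.univ) (fun x _ => Finset.mem_univ _)]
  refine Finset.sum_congr rfl fun j _ => ?_
  congr 1
  ext v
  simp only [Finset.mem_filter, Finset.mem_inter]
  constructor
  · rintro ⟨hv, rfl⟩; exact ⟨hv, (hpart v).choose_spec.1⟩
  · rintro ⟨hv, hvj⟩; exact ⟨hv, ((hpart v).choose_spec.2 j hvj).symm⟩

theorem localizable_iff_indomNum_eq_theta (G : SimpleGraph V) :
    Localizable G ↔ indomNum G = theta G := by
  classical
  have hθne : {n | ∃ C : Fin n → Finset V,
      (∀ j, G.IsClique ↑(C j)) ∧ ∀ v, ∃! j, v ∈ C j}.Nonempty := by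
    refine ⟨Fintype.card V, fun j => {(Fintype.equivFin V).symm j}, fun j => ?_, fun v => ?_⟩
    · simp
    · refine ⟨Fintype.equivFin V v, by simp, fun j hj => ?_⟩
      simp only [Finset.mem_singleton] at hj
      rw [hj]; simp
  have hθmem : ∃ C : Fin (theta G) → Finset V,
      (∀ j, G.IsClique ↑(C j)) ∧ ∀ v, ∃! j, v ∈ C j := Nat.sInf_mem hθne
  obtain ⟨C₀, hcl₀, hpart₀⟩ := hθmem
  -- i(G) ≤ θ(G) always
  obtain ⟨S₀, hS₀⟩ := exists_maxIndep G
  have hiθ : indomNum G ≤ theta G := by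
    have h1 : indomNum G ≤ S₀.card := Nat.sInf_le ⟨S₀, hS₀, rfl⟩
    have h2 : S₀.card ≤ theta G := by
      rw [card_eq_sum_inter hpart₀ S₀]
      calc ∑ j, (S₀ ∩ C₀ j).card ≤ ∑ _j : Fin (theta G), 1 :=
            Finset.sum_le_sum fun j _ => inter_card_le_one G (hcl₀ j) hS₀.1
        _ = theta G := by simp
    omega
  constructor
  · rintro ⟨k, C, hstrong, hpart⟩
    have hcard : ∀ S, MaxIndep G S → S.card = k := by
      intro S hS
      rw [card_eq_sum_inter hpart S]
      have hone : ∀ j, (S ∩ C j).card = 1 := fun j =>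
        le_antisymm (inter_card_le_one G (hstrong j).1 hS.1)
          (Finset.card_pos.mpr <| by
            simpa [Finset.inter_comm] using (hstrong j).2 S hS)
      simp [hone]
    have hik : indomNum G = k := by
      apply le_antisymm
      · exact Nat.sInf_le ⟨S₀, hS₀, hcard S₀ hS₀⟩
      · refine le_csInf ⟨S₀.card, S₀, hS₀, rfl⟩ ?_
        rintro n ⟨T, hT, rfl⟩
        exact (hcard T hT).ge
    have hθk : theta G ≤ k := Nat.sInf_le ⟨C, fun j => (hstrong j).1, hpart⟩
    omega
  · intro h
    refine ⟨theta G, C₀, fun j => ⟨hcl₀ j, ?_⟩, hpart₀⟩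
    intro S hS
    have h1 : theta G ≤ S.card := h ▸ Nat.sInf_le ⟨S, hS, rfl⟩
    have h2 := card_eq_sum_inter hpart₀ S
    by_contra hempty
    rw [Finset.not_nonempty_iff_eq_empty] at hempty
    have hlt : ∑ j', (S ∩ C₀ j').card < ∑ _j' : Fin (theta G), 1 := by
      apply Finset.sum_lt_sum (fun i _ => inter_card_le_one G (hcl₀ i) hS.1)
      have hj : j ∈ Finset.univ := Finset.mem_univ j
      exact ⟨j, hj, by rw [Finset.inter_comm, hempty]; simp⟩
    simp only [Finset.sum_const, Finset.card_univ, Fintype.card_fin, smul_eq_mul,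
      mul_one] at hlt
    omega
end

section
/- Let G be a graph and uv an edge of G. Then {u,v} is a strong clique in G if and only if uv is not contained in any triangle and every vertex of N(u) is adjacent to every vertex of N(v). -/
variable {V : Type*} [Fintype V] [DecidableEq V]

lemma exists_adj_of_maxIndep (G : SimpleGraph V) {S : Finset V} (hS : MaxIndep G S)
    {u : V} (hu : u ∉ S) : ∃ x ∈ S, G.Adj u x := by
  by_contra hno
  push_neg at hno
  have h1 : IsIndep G (insert u S) := by
    intro a ha b hb hab
    rcases Finset.mem_insert.mp ha with h1 | h1 <;>
      rcases Finset.mem_insert.mp hb with h2 | h2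
    · rw [h1, h2] at hab; exact G.loopless.irrefl _ hab
    · rw [h1] at hab; exact hno b h2 hab
    · rw [h2] at hab; exact hno a h1 hab.symm
    · exact hS.1 h1 h2 hab
  have := hS.2 _ h1 (Finset.subset_insert _ _)
  exact hu (this ▸ Finset.mem_insert_self u S)

theorem strong_edge_iff (G : SimpleGraph V) (u v : V) (huv : G.Adj u v) :
    IsStrongClique G {u, v} ↔
      (∀ w, ¬ (G.Adj u w ∧ G.Adj v w)) ∧
        ∀ x y, G.Adj u x → G.Adj v y → G.Adj x y := by
  classical
  constructor
  · rintro ⟨hcl, hstrong⟩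
    constructor
    · rintro w ⟨hu, hv⟩
      have hind : IsIndep G {w} := by
        intro a ha b hb hab
        simp only [Finset.mem_singleton] at ha hb
        subst ha; subst hb; exact G.loopless.irrefl _ hab
      obtain ⟨T, hT, hsub⟩ := exists_maxIndep_superset G {w} hind
      have hw : w ∈ T := hsub (by simp)
      obtain ⟨z, hz⟩ := hstrong T hT
      simp only [Finset.mem_inter, Finset.mem_insert, Finset.mem_singleton] at hz
      rcases hz with ⟨rfl | rfl, hz2⟩
      · exact hT.1 hz2 hw hu
      · exact hT.1 hz2 hw hv
    · intro x y hux hvy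
      by_contra hxy
      have hind : IsIndep G {x, y} := by
        intro a ha b hb hab
        simp only [Finset.mem_insert, Finset.mem_singleton] at ha hb
        rcases ha with rfl | rfl <;> rcases hb with rfl | rfl
        · exact G.loopless.irrefl _ hab
        · exact hxy hab
        · exact hxy hab.symm
        · exact G.loopless.irrefl _ hab
      obtain ⟨T, hT, hsub⟩ := exists_maxIndep_superset G {x, y} hind
      have hx : x ∈ T := hsub (by simp)
      have hy : y ∈ T := hsub (by simp)
      obtain ⟨z, hz⟩ := hstrong T hT
      simp only [Finset.mem_inter, Finset.mem_insert, Finset.mem_singleton] at hz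
      rcases hz with ⟨rfl | rfl, hz2⟩
      · exact hT.1 hz2 hx hux
      · exact hT.1 hz2 hy hvy
  · rintro ⟨htri, hcomp⟩
    refine ⟨?_, ?_⟩
    · intro a ha b hb hab
      simp only [Finset.coe_insert, Set.mem_insert_iff, Finset.coe_singleton,
        Set.mem_singleton_iff] at ha hb
      rcases ha with rfl | rfl <;> rcases hb with rfl | rfl
      · exact absurd rfl hab
      · exact huv
      · exact huv.symm
      · exact absurd rfl hab
    · intro S hS
      by_contra hemp
      rw [Finset.not_nonempty_iff_eq_empty, Finset.eq_empty_iff_forall_notMem] at hemp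
      have hu : u ∉ S := fun h => hemp u (by simp [h])
      have hv : v ∉ S := fun h => hemp v (by simp [h])
      obtain ⟨x, hxS, hux⟩ := exists_adj_of_maxIndep G hS hu
      obtain ⟨y, hyS, hvy⟩ := exists_adj_of_maxIndep G hS hv
      by_cases hxy : x = y
      · exact htri x ⟨hux, hxy ▸ hvy⟩
      · exact hS.1 hxS hyS (hcomp x y hux hvy)
end

section
/- If a graph G without isolated vertices has a perfect matching every edge of which is a strong clique, then G is well-covered with α(G) = |V(G)|/2 (i.e., G is very well-covered). -/
variable {V : Type*} [Fintype V] [DecidableEq V]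

theorem perfectMatching_strong_edges_very_wellCovered (G : SimpleGraph V)
    (hiso : ∀ v : V, ∃ w, G.Adj v w) (M : G.Subgraph)
    (hM : M.IsPerfectMatching) (hstrong : ∀ u v, M.Adj u v → IsStrongClique G {u, v}) :
    WellCovered G ∧ 2 * alpha G = Fintype.card V := by
  classical
  have hp : ∀ v : V, ∃! w, M.Adj v w := fun v => hM.1 (hM.2 v)
  set p : V → V := fun v => (hp v).choose with hpdef
  have hpadj : ∀ v, M.Adj v (p v) := fun v => (hp v).choose_spec.1
  have hpinv : ∀ v, p (p v) = v := fun v =>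
    ((hp (p v)).choose_spec.2 v (hpadj v).symm).symm
  have hpinj : Function.Injective p := fun a b h => by
    rw [← hpinv a, h, hpinv]
  -- exactly one of v, p v is in a maximal independent set
  have key : ∀ S, MaxIndep G S → ∀ v, v ∉ S ↔ p v ∈ S := by
    intro S hS v
    constructor
    · intro hv
      obtain ⟨x, hx⟩ := (hstrong v (p v) (hpadj v)).2 S hS
      rw [Finset.mem_inter] at hx
      rcases Finset.mem_insert.1 hx.1 with h | h
      · exact absurd (h ▸ hx.2) hv
      · exact (Finset.mem_singleton.1 h) ▸ hx.2
    · intro hpv hv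
      exact hS.1 hv hpv (M.adj_sub (hpadj v))
  have hcompl : ∀ S, MaxIndep G S → Sᶜ = S.image p := by
    intro S hS
    ext v
    simp only [Finset.mem_compl, Finset.mem_image]
    constructor
    · intro hv
      exact ⟨p v, (key S hS v).1 hv, hpinv v⟩
    · rintro ⟨u, hu, rfl⟩
      exact fun hmem => (key S hS u).2 hmem hu
  have hcard : ∀ S, MaxIndep G S → 2 * S.card = Fintype.card V := by
    intro S hS
    have h1 : Sᶜ.card = S.card := by
      rw [hcompl S hS, Finset.card_image_of_injective _ hpinj]
    have := Finset.card_add_card_compl S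
    omega
  -- maximum-cardinality independent set
  have hne : (Finset.univ.filter (fun S : Finset V => IsIndep G S)).Nonempty :=
    ⟨∅, Finset.mem_filter.2 ⟨Finset.mem_univ _, fun u hu => by simp at hu⟩⟩
  obtain ⟨S₀, hS₀mem, hS₀max⟩ := Finset.exists_max_image _ Finset.card hne
  have hS₀indep : IsIndep G S₀ := (Finset.mem_filter.1 hS₀mem).2
  have hS₀ : MaxIndep G S₀ := by
    refine ⟨hS₀indep, fun T hT hsub => ?_⟩
    exact (Finset.eq_of_subset_of_card_le hsub
      (hS₀max T (Finset.mem_filter.2 ⟨Finset.mem_univ _, hT⟩))).symm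
  have hmem0 : S₀.card ∈ {n | ∃ S : Finset V, IsIndep G S ∧ S.card = n} := ⟨S₀, hS₀indep, rfl⟩
  have hub : ∀ n ∈ {n | ∃ S : Finset V, IsIndep G S ∧ S.card = n}, n ≤ S₀.card := by
    rintro n ⟨T, hT, rfl⟩
    exact hS₀max T (Finset.mem_filter.2 ⟨Finset.mem_univ _, hT⟩)
  have halpha : alpha G = S₀.card :=
    le_antisymm (csSup_le ⟨S₀.card, hmem0⟩ hub) (le_csSup ⟨S₀.card, hub⟩ hmem0)
  constructor
  · intro S T hS hT
    have := hcard S hS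
    have := hcard T hT
    omega
  · rw [halpha]; exact hcard S₀ hS₀
end

section
/- A triangle-free graph G without isolated vertices is localizable if and only if G has a perfect matching every edge of which is a strong clique. -/
variable {V : Type*} [Fintype V] [DecidableEq V]

theorem triangleFree_localizable_iff (G : SimpleGraph V)
    (htf : G.CliqueFree 3) (hiso : ∀ v : V, ∃ w, G.Adj v w) :
    Localizable G ↔
      ∃ M : G.Subgraph, M.IsPerfectMatching ∧
        ∀ u v, M.Adj u v → IsStrongClique G {u, v} := by
  classical
  constructor
  · rintro ⟨k, C, hC, hpart⟩
    -- every vertex of each clique has a distinct mate in the same clique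
    -- no clique has a third element (triangle-free)
    have hthird : ∀ j, ∀ u v x, u ∈ C j → v ∈ C j → x ∈ C j → u ≠ v → x = u ∨ x = v := by
      intro j u v x hu hv hx huv
      by_contra h
      push_neg at h
      obtain ⟨hxu, hxv⟩ := h
      exact htf {u, v, x} ⟨(hC j).1.subset (by
        intro y hy
        simp only [Finset.coe_insert, Set.mem_insert_iff, Finset.coe_singleton,
          Finset.mem_insert, Finset.mem_singleton] at hy ⊢
        rcases hy with h | h | h <;> subst h <;> simp [hu, hv, hx]), by
        rw [Finset.card_insert_of_notMem (by simp [huv, Ne.symm hxu]),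
          Finset.card_insert_of_notMem (by simp [Ne.symm hxv])]
        simp⟩
    have hmate : ∀ v, ∃ w, w ≠ v ∧ ∃ j, v ∈ C j ∧ w ∈ C j := by
      intro v
      obtain ⟨j, hvj, _⟩ := hpart v
      obtain ⟨u, hvu⟩ := hiso v
      have hindep : IsIndep G {u} := by
        intro a ha b hb
        simp only [Finset.mem_singleton] at ha hb
        subst ha; subst hb; exact G.irrefl
      obtain ⟨T, hT, hsub⟩ := exists_maxIndep_superset G {u} hindep
      obtain ⟨x, hx⟩ := (hC j).2 T hT
      simp only [Finset.mem_inter] at hx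
      refine ⟨x, fun h => ?_, j, hvj, hx.1⟩
      subst h
      exact hT.1 hx.2 (hsub (Finset.mem_singleton_self u)) hvu
    refine ⟨{ verts := Set.univ,
              Adj := fun u v => u ≠ v ∧ ∃ j, u ∈ C j ∧ v ∈ C j,
              adj_sub := ?_, edge_vert := fun _ => trivial,
              symm := ?_ }, ?_, ?_⟩
    · rintro u v ⟨huv, j, hu, hv⟩
      exact (hC j).1 hu hv huv
    · constructor
      rintro u v ⟨huv, j, hu, hv⟩
      exact ⟨huv.symm, j, hv, hu⟩
    · rw [SimpleGraph.Subgraph.isPerfectMatching_iff]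
      intro v
      obtain ⟨w, hwv, j, hvj, hwj⟩ := hmate v
      refine ⟨w, ⟨hwv.symm, j, hvj, hwj⟩, ?_⟩
      rintro y ⟨hyv, j', hvj', hyj'⟩
      obtain ⟨j₀, hj₀, huniq⟩ := hpart v
      have hjj : j' = j := (huniq j' hvj').trans (huniq j hvj).symm
      rw [hjj] at hyj'
      rcases hthird j v w y hvj hwj hyj' (Ne.symm hwv) with h | h
      · exact absurd h.symm hyv
      · exact h
    · rintro u v ⟨huv, j, hu, hv⟩
      refine ⟨?_, ?_⟩
      · intro a ha b hb hab
        simp only [Finset.coe_insert, Set.mem_insert_iff, Finset.coe_singleton,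
          Set.mem_singleton_iff] at ha hb
        have ha' : a ∈ C j := by rcases ha with h | h <;> subst h <;> assumption
        have hb' : b ∈ C j := by rcases hb with h | h <;> subst h <;> assumption
        exact (hC j).1 ha' hb' hab
      · intro S hS
        obtain ⟨x, hx⟩ := (hC j).2 S hS
        simp only [Finset.mem_inter] at hx
        refine ⟨x, Finset.mem_inter.mpr ⟨?_, hx.2⟩⟩
        rcases hthird j u v x hu hv hx.1 huv with h | h <;> subst h <;> simp
  · rintro ⟨M, hM, hstrong⟩
    have hm := SimpleGraph.Subgraph.isPerfectMatching_iff.mp hM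
    set w : V → V := fun v => (hm v).choose with hw
    have hadj : ∀ v, M.Adj v (w v) := fun v => (hm v).choose_spec.1
    have huniq : ∀ v y, M.Adj v y → y = w v := fun v y h => (hm v).choose_spec.2 y h
    have hinv : ∀ v, w (w v) = v := fun v => (huniq (w v) v (hadj v).symm).symm
    have hne : ∀ v, w v ≠ v := fun v => (M.adj_sub (hadj v)).ne'
    set f : V → Finset V := fun v => {v, w v} with hf
    have hfw : ∀ v, f (w v) = f v := by
      intro v
      simp only [hf, hinv]
      exact Finset.pair_comm _ _
    set S : Finset (Finset V) := Finset.univ.image f with hSdef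
    refine ⟨S.card, fun j => (S.equivFin.symm j : Finset V), ?_, ?_⟩
    · intro j
      have hc : ((S.equivFin.symm j : {x // x ∈ S}) : Finset V) ∈ S :=
        (S.equivFin.symm j).2
      obtain ⟨u, _, hequ⟩ := Finset.mem_image.mp hc
      show IsStrongClique G ((S.equivFin.symm j : {x // x ∈ S}) : Finset V)
      rw [← hequ]
      exact hstrong u (w u) (hadj u)
    · intro v
      have hfvS : f v ∈ S := Finset.mem_image_of_mem f (Finset.mem_univ v)
      refine ⟨S.equivFin ⟨f v, hfvS⟩, ?_, ?_⟩
      · show v ∈ ((S.equivFin.symm (S.equivFin ⟨f v, hfvS⟩) : {x // x ∈ S}) : Finset V)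
        rw [Equiv.symm_apply_apply]
        exact Finset.mem_insert_self v _
      · intro j hj
        have : (S.equivFin.symm j : Finset V) = f v := by
          have hc : ((S.equivFin.symm j : {x // x ∈ S}) : Finset V) ∈ S :=
            (S.equivFin.symm j).2
          obtain ⟨u, _, hequ⟩ := Finset.mem_image.mp hc
          have hj2 : v ∈ f u := by rw [hequ]; exact hj
          have hfufv : f u = f v := by
            simp only [hf, Finset.mem_insert, Finset.mem_singleton] at hj2
            rcases hj2 with h | h
            · subst h; rfl
            · subst h; exact (hfw u).symm
          exact hequ.symm.trans hfufv
        have heq : S.equivFin.symm j = (⟨f v, hfvS⟩ : {x // x ∈ S}) := Subtype.ext this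
        calc j = S.equivFin (S.equivFin.symm j) := (Equiv.apply_symm_apply _ _).symm
        _ = S.equivFin ⟨f v, hfvS⟩ := by rw [heq]
end

section
/- In a C4-free graph, a clique is strong if and only if it is simplicial, i.e., equals the closed neighborhood N[v] of some vertex v. -/
variable {V : Type*} [Fintype V] [DecidableEq V]

/-- `G` has no induced cycle on four vertices. -/
def C4Free (G : SimpleGraph V) : Prop :=
  ¬ ∃ a b c d : V, a ≠ c ∧ b ≠ d ∧ G.Adj a b ∧ G.Adj b c ∧ G.Adj c d ∧ G.Adj d a ∧
      ¬ G.Adj a c ∧ ¬ G.Adj b d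

lemma exists_maxIndep_extend (G : SimpleGraph V) (S : Finset V) (hS : IsIndep G S) :
    ∃ T, S ⊆ T ∧ MaxIndep G T := by
  classical
  obtain ⟨T, hTmem, hTmax⟩ := Finset.exists_max_image
    (Finset.univ.powerset.filter (fun T => S ⊆ T ∧ IsIndep G T)) Finset.card
    ⟨S, by simp [hS]⟩
  simp only [Finset.mem_filter] at hTmem
  refine ⟨T, hTmem.2.1, hTmem.2.2, ?_⟩
  intro T' hT' hsub
  have hmem : T' ∈ Finset.univ.powerset.filter (fun T => S ⊆ T ∧ IsIndep G T) :=
    Finset.mem_filter.2 ⟨Finset.mem_powerset.2 (Finset.subset_univ _),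
      hTmem.2.1.trans hsub, hT'⟩
  exact (Finset.eq_of_subset_of_card_le hsub (hTmax T' hmem)).symm

theorem strong_iff_simplicial_of_C4Free (G : SimpleGraph V) [DecidableRel G.Adj]
    (hG : C4Free G) (C : Finset V) (hC : G.IsClique ↑C) :
    IsStrongClique G C ↔ ∃ v : V, C = insert v (G.neighborFinset v) := by
  classical
  constructor
  · rintro ⟨-, hstrong⟩
    by_contra hns
    push_neg at hns
    -- every vertex of `C` has a neighbor outside `C`
    have key : ∀ v ∈ C, ∃ u, G.Adj v u ∧ u ∉ C := by
      intro v hv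
      by_contra h
      push_neg at h
      apply hns v
      apply Finset.Subset.antisymm
      · intro c hc
        rcases eq_or_ne c v with rfl | hne
        · exact Finset.mem_insert_self _ _
        · refine Finset.mem_insert_of_mem ?_
          rw [G.mem_neighborFinset]
          exact hC hv hc (fun h' => hne h'.symm)
      · intro c hc
        rcases Finset.mem_insert.1 hc with rfl | hc
        · exact hv
        · exact h c ((G.mem_neighborFinset v c).1 hc)
    -- choose an independent set outside C dominating as much of C as possible
    set f : Finset V → ℕ :=
      fun S => (C.filter (fun c => ∃ s ∈ S, G.Adj c s)).card with hf
    obtain ⟨S, hSmem, hSmax⟩ := Finset.exists_max_image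
      (Finset.univ.powerset.filter (fun S : Finset V => IsIndep G S ∧ ∀ x ∈ S, x ∉ C)) f
      ⟨∅, by simp [IsIndep]⟩
    simp only [Finset.mem_filter] at hSmem
    obtain ⟨-, hSind, hSout⟩ := hSmem
    -- S dominates all of C
    have hdom : ∀ v ∈ C, ∃ s ∈ S, G.Adj v s := by
      intro v hv
      by_contra hvnd
      push_neg at hvnd
      obtain ⟨u, hvu, huC⟩ := key v hv
      have huS : u ∉ S := fun h => hvnd u h hvu
      set S' : Finset V := insert u (S.filter (fun s => ¬ G.Adj u s)) with hS'
      have hS'ind : IsIndep G S' := by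
        intro x hx y hy hxy
        rcases Finset.mem_insert.1 hx with rfl | hx <;>
          rcases Finset.mem_insert.1 hy with h' | h'
        · exact G.irrefl (h' ▸ hxy)
        · exact (Finset.mem_filter.1 h').2 hxy
        · exact (Finset.mem_filter.1 hx).2 (h' ▸ hxy).symm
        · exact hSind (Finset.mem_filter.1 hx).1 (Finset.mem_filter.1 h').1 hxy
      have hS'out : ∀ x ∈ S', x ∉ C := by
        intro x hx
        rcases Finset.mem_insert.1 hx with rfl | hx
        · exact huC
        · exact hSout x (Finset.mem_filter.1 hx).1
      have hS'mem : S' ∈ Finset.univ.powerset.filter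
          (fun S : Finset V => IsIndep G S ∧ ∀ x ∈ S, x ∉ C) :=
        Finset.mem_filter.2 ⟨Finset.mem_powerset.2 (Finset.subset_univ _), hS'ind, hS'out⟩
      -- dominated set strictly grows
      have hsub : C.filter (fun c => ∃ s ∈ S, G.Adj c s) ⊆
          C.filter (fun c => ∃ s ∈ S', G.Adj c s) := by
        intro c hc
        obtain ⟨hcC, s, hsS, hcs⟩ := Finset.mem_filter.1 hc
        rcases Classical.em (G.Adj u s) with hus | hus
        · -- show c is adjacent to u, using C4-freeness
          have hcu : G.Adj c u := by
            by_contra hcu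
            have hcv : c ≠ v := by rintro rfl; exact hvnd s hsS hcs
            exact hG ⟨v, u, s, c,
              fun h => hSout s hsS (h ▸ hv),
              fun h => huC (h ▸ hcC),
              hvu, hus, hcs.symm, hC hcC hv hcv,
              fun h => hvnd s hsS h, fun h => hcu h.symm⟩
          exact Finset.mem_filter.2 ⟨hcC, u, Finset.mem_insert_self _ _, hcu⟩
        · exact Finset.mem_filter.2 ⟨hcC, s,
            Finset.mem_insert_of_mem (Finset.mem_filter.2 ⟨hsS, hus⟩), hcs⟩
      have hvnew : v ∈ C.filter (fun c => ∃ s ∈ S', G.Adj c s) :=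
        Finset.mem_filter.2 ⟨hv, u, Finset.mem_insert_self _ _, hvu⟩
      have hvold : v ∉ C.filter (fun c => ∃ s ∈ S, G.Adj c s) := by
        intro h
        obtain ⟨-, s, hsS, hvs⟩ := Finset.mem_filter.1 h
        exact hvnd s hsS hvs
      have hlt : f S < f S' :=
        Finset.card_lt_card ⟨hsub, fun h => hvold (h hvnew)⟩
      exact absurd (hSmax S' hS'mem) (not_le.2 hlt)
    -- extend S to a maximal independent set, disjoint from C : contradiction
    obtain ⟨T, hST, hT⟩ := exists_maxIndep_extend G S hSind
    obtain ⟨c, hc⟩ := hstrong T hT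
    obtain ⟨hcC, hcT⟩ := Finset.mem_inter.1 hc
    obtain ⟨s, hsS, hcs⟩ := hdom c hcC
    exact hT.1 hcT (hST hsS) hcs
  · rintro ⟨v, rfl⟩
    refine ⟨hC, fun S hS => ?_⟩
    rcases Classical.em (v ∈ S) with hv | hv
    · exact ⟨v, Finset.mem_inter.2 ⟨Finset.mem_insert_self _ _, hv⟩⟩
    · have : ¬ IsIndep G (insert v S) := by
        intro h
        exact hv ((hS.2 _ h (Finset.subset_insert _ _)) ▸ Finset.mem_insert_self v S)
      have : ∃ u ∈ S, G.Adj v u := by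
        by_contra h
        push_neg at h
        apply this
        intro x hx y hy hxy
        rcases Finset.mem_insert.1 hx with rfl | hx <;>
          rcases Finset.mem_insert.1 hy with h' | h'
        · exact G.irrefl (h' ▸ hxy)
        · exact h y h' hxy
        · exact h x hx (h' ▸ hxy).symm
        · exact hS.1 hx h' hxy
      obtain ⟨u, huS, hvu⟩ := this
      exact ⟨u, Finset.mem_inter.2 ⟨Finset.mem_insert_of_mem
        ((G.mem_neighborFinset v u).2 hvu), huS⟩⟩
end

section
/- Let r ≥ 1 and let G be a connected r-regular graph. Then G has a strong clique of size two if and only if G is isomorphic to the complete bipartite graph K_{r,r}. -/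
variable {V : Type*} [Fintype V] [DecidableEq V]

theorem strong_edge_in_regular_iff_completeBipartite (G : SimpleGraph V) [DecidableRel G.Adj] (r : ℕ)
    (hr : 1 ≤ r) (hconn : G.Connected) (hreg : G.IsRegularOfDegree r) :
    (∃ u v : V, u ≠ v ∧ IsStrongClique G {u, v}) ↔
      Nonempty (G ≃g completeBipartiteGraph (Fin r) (Fin r)) := by
  classical
  constructor
  · rintro ⟨u, v, huv, hcl, hstrong⟩
    have hadj : G.Adj u v := hcl (by simp) (by simp) huv
    set A := G.neighborFinset u with hA
    set B := G.neighborFinset v with hB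
    have hAcard : A.card = r := hreg u
    have hBcard : B.card = r := hreg v
    have hdisj : ∀ x, x ∈ A → x ∉ B := by
      intro x hxA hxB
      rw [hA, SimpleGraph.mem_neighborFinset] at hxA
      rw [hB, SimpleGraph.mem_neighborFinset] at hxB
      obtain ⟨T, hT, hsub⟩ := exists_maxIndep_superset G {x} (by
        intro a ha b hb
        simp only [Finset.mem_singleton] at ha hb
        subst ha; subst hb; exact G.loopless.irrefl _)
      obtain ⟨w, hw⟩ := hstrong T hT
      rw [Finset.mem_inter] at hw
      have hxT : x ∈ T := hsub (Finset.mem_singleton_self x)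
      rcases Finset.mem_insert.mp hw.1 with h | h
      · subst h; exact hT.1 hw.2 hxT hxA
      · rw [Finset.mem_singleton] at h; subst h; exact hT.1 hw.2 hxT hxB
    have hxy : ∀ x ∈ A, ∀ y ∈ B, G.Adj x y := by
      intro x hxA y hyB
      have hxA' : G.Adj u x := by rwa [hA, SimpleGraph.mem_neighborFinset] at hxA
      have hyB' : G.Adj v y := by rwa [hB, SimpleGraph.mem_neighborFinset] at hyB
      by_cases hxv : x = v
      · subst hxv; exact hyB'
      by_cases hyu : y = u
      · subst hyu; exact hxA'.symm
      by_contra hnadj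
      have hne : x ≠ y := by rintro rfl; exact hdisj x hxA hyB
      obtain ⟨T, hT, hsub⟩ := exists_maxIndep_superset G {x, y} (by
        intro a ha b hb hab
        simp only [Finset.mem_insert, Finset.mem_singleton] at ha hb
        rcases ha with rfl | rfl <;> rcases hb with rfl | rfl
        · exact G.loopless.irrefl _ hab
        · exact hnadj hab
        · exact hnadj hab.symm
        · exact G.loopless.irrefl _ hab)
      obtain ⟨w, hw⟩ := hstrong T hT
      rw [Finset.mem_inter] at hw
      have hxT : x ∈ T := hsub (by simp)
      have hyT : y ∈ T := hsub (by simp)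
      rcases Finset.mem_insert.mp hw.1 with h | h
      · subst h; exact hT.1 hw.2 hxT hxA'
      · rw [Finset.mem_singleton] at h; subst h; exact hT.1 hw.2 hyT hyB'
    have hNA : ∀ x ∈ A, G.neighborFinset x = B := by
      intro x hxA
      refine (Finset.eq_of_subset_of_card_le (fun y hy => ?_) ?_).symm
      · rw [SimpleGraph.mem_neighborFinset]; exact hxy x hxA y hy
      · rw [SimpleGraph.card_neighborFinset_eq_degree, hreg x, hBcard]
    have hNB : ∀ y ∈ B, G.neighborFinset y = A := by
      intro y hyB
      refine (Finset.eq_of_subset_of_card_le (fun x hx => ?_) ?_).symm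
      · rw [SimpleGraph.mem_neighborFinset]; exact (hxy x hx y hyB).symm
      · rw [SimpleGraph.card_neighborFinset_eq_degree, hreg y, hAcard]
    have hstep : ∀ a b : V, a ∈ A ∪ B → G.Adj a b → b ∈ A ∪ B := by
      intro a b ha hab
      rcases Finset.mem_union.mp ha with h | h
      · exact Finset.mem_union_right _
          (by rw [← hNA a h, SimpleGraph.mem_neighborFinset]; exact hab)
      · exact Finset.mem_union_left _
          (by rw [← hNB a h, SimpleGraph.mem_neighborFinset]; exact hab)
    have hwalk : ∀ {a b : V}, G.Walk a b → a ∈ A ∪ B → b ∈ A ∪ B := by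
      intro a b p
      induction p with
      | nil => exact id
      | cons h _ ih => exact fun ha => ih (hstep _ _ ha h)
    have hunion : ∀ z : V, z ∈ A ∪ B := by
      intro z
      obtain ⟨p⟩ := hconn.preconnected u z
      exact hwalk p (Finset.mem_union_right _
        (by rw [hB, SimpleGraph.mem_neighborFinset]; exact hadj.symm))
    have hmemB : ∀ x : V, x ∉ A ↔ x ∈ B := by
      intro x
      constructor
      · intro hx
        rcases Finset.mem_union.mp (hunion x) with h | h
        · exact absurd h hx
        · exact h
      · intro hx hxA; exact hdisj x hxA hx
    have hbip : ∀ x y : V, G.Adj x y ↔ ((x ∈ A ∧ y ∈ B) ∨ (x ∈ B ∧ y ∈ A)) := by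
      intro x y
      constructor
      · intro h
        rcases Finset.mem_union.mp (hunion x) with hx | hx
        · exact Or.inl ⟨hx, by rw [← hNA x hx, SimpleGraph.mem_neighborFinset]; exact h⟩
        · exact Or.inr ⟨hx, by rw [← hNB x hx, SimpleGraph.mem_neighborFinset]; exact h⟩
      · rintro (⟨hx, hy⟩ | ⟨hx, hy⟩)
        · exact hxy x hx y hy
        · exact (hxy y hy x hx).symm
    let eA : {x // x ∈ A} ≃ Fin r := Finset.equivFinOfCardEq hAcard
    let eB : {x // x ∈ B} ≃ Fin r := Finset.equivFinOfCardEq hBcard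
    let e : V ≃ Fin r ⊕ Fin r :=
      (Equiv.sumCompl (· ∈ A)).symm.trans
        (Equiv.sumCongr eA ((Equiv.subtypeEquivRight hmemB).trans eB))
    have heL : ∀ (x : V) (h : x ∈ A), e x = Sum.inl (eA ⟨x, h⟩) := by
      intro x h
      show (Equiv.sumCongr eA ((Equiv.subtypeEquivRight hmemB).trans eB))
          ((Equiv.sumCompl (· ∈ A)).symm x) = _
      rw [Equiv.sumCompl_symm_apply_of_pos (p := (· ∈ A)) h]
      rfl
    have heR : ∀ (x : V) (h : x ∉ A), e x = Sum.inr (eB ⟨x, (hmemB x).mp h⟩) := by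
      intro x h
      show (Equiv.sumCongr eA ((Equiv.subtypeEquivRight hmemB).trans eB))
          ((Equiv.sumCompl (· ∈ A)).symm x) = _
      rw [Equiv.sumCompl_symm_apply_of_neg (p := (· ∈ A)) h]
      rfl
    refine ⟨⟨e, ?_⟩⟩
    intro a b
    show (completeBipartiteGraph (Fin r) (Fin r)).Adj (e a) (e b) ↔ G.Adj a b
    rcases em (a ∈ A) with ha | ha <;> rcases em (b ∈ A) with hb | hb
    · rw [heL a ha, heL b hb]
      constructor
      · rintro (⟨_, h⟩ | ⟨h, _⟩) <;> simp at h
      · intro h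
        rcases (hbip a b).mp h with ⟨_, hbB⟩ | ⟨haB, _⟩
        · exact (hdisj b hb hbB).elim
        · exact (hdisj a ha haB).elim
    · rw [heL a ha, heR b hb]
      simp only [completeBipartiteGraph]
      constructor
      · intro _; exact (hbip a b).mpr (Or.inl ⟨ha, (hmemB b).mp hb⟩)
      · intro _; exact Or.inl ⟨by simp, by simp⟩
    · rw [heR a ha, heL b hb]
      constructor
      · intro _; exact (hbip a b).mpr (Or.inr ⟨(hmemB a).mp ha, hb⟩)
      · intro _; exact Or.inr ⟨by simp, by simp⟩
    · rw [heR a ha, heR b hb]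
      constructor
      · rintro (⟨h, _⟩ | ⟨_, h⟩) <;> simp at h
      · intro h
        rcases (hbip a b).mp h with ⟨haA, _⟩ | ⟨_, hbA⟩
        · exact (ha haA).elim
        · exact (hb hbA).elim
  · rintro ⟨φ⟩
    set K := completeBipartiteGraph (Fin r) (Fin r) with hK
    set z0 : Fin r := ⟨0, hr⟩ with hz0
    set u : V := φ.symm (Sum.inl z0) with hu
    set v : V := φ.symm (Sum.inr z0) with hv
    have hKadj : K.Adj (Sum.inl z0) (Sum.inr z0) := Or.inl ⟨rfl, rfl⟩
    have hadj : G.Adj u v := φ.symm.map_rel_iff.mpr hKadj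
    have huv : u ≠ v := fun h => by
      have := φ.symm.injective h
      simp at this
    refine ⟨u, v, huv, ?_, ?_⟩
    · intro x hx y hy hne
      simp only [Finset.coe_insert, Set.mem_insert_iff, Finset.coe_singleton,
        Set.mem_singleton_iff] at hx hy
      rcases hx with rfl | rfl <;> rcases hy with rfl | rfl
      · exact absurd rfl hne
      · exact hadj
      · exact hadj.symm
      · exact absurd rfl hne
    · intro S hS
      have hSne : S.Nonempty := by
        by_contra h
        rw [Finset.not_nonempty_iff_eq_empty] at h
        have h2 := hS.2 {u} (by
          intro x hx y hy
          simp only [Finset.mem_singleton] at hx hy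
          subst hx; subst hy; exact G.loopless.irrefl _) (by simp [h])
        rw [h] at h2
        simp at h2
      obtain ⟨w, hwS⟩ := hSne
      have key : ∀ z : V, (∀ s ∈ S, ¬ K.Adj (φ z) (φ s)) → z ∈ S := by
        intro z hz
        by_contra hzS
        have hind : IsIndep G (insert z S) := by
          intro x hx y hy hxy
          rcases Finset.mem_insert.mp hx with hx' | hx' <;>
            rcases Finset.mem_insert.mp hy with hy' | hy'
          · rw [hx', hy'] at hxy; exact G.loopless.irrefl _ hxy
          · rw [hx'] at hxy; exact hz y hy' (φ.map_rel_iff.mpr hxy)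
          · rw [hy'] at hxy; exact hz x hx' (φ.map_rel_iff.mpr hxy.symm)
          · exact hS.1 hx' hy' hxy
        have := hS.2 _ hind (Finset.subset_insert z S)
        rw [← this] at hzS
        exact hzS (Finset.mem_insert_self z S)
      rcases hw : φ w with c | c
      · -- w on left side; show u ∈ S
        have huS : u ∈ S := by
          apply key
          intro s hs hKs
          have hφu : φ u = Sum.inl z0 := by rw [hu]; simp
          rw [hφu] at hKs
          have hsr : (φ s).isRight := by
            rcases hKs with ⟨_, h⟩ | ⟨h, _⟩
            · exact h
            · simp at h
          have hKws : K.Adj (φ w) (φ s) := by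
            rw [hw]; exact Or.inl ⟨rfl, hsr⟩
          exact hS.1 hwS hs (φ.map_rel_iff.mp hKws)
        exact ⟨u, Finset.mem_inter.mpr ⟨by simp, huS⟩⟩
      · -- w on right side; show v ∈ S
        have hvS : v ∈ S := by
          apply key
          intro s hs hKs
          have hφv : φ v = Sum.inr z0 := by rw [hv]; simp
          rw [hφv] at hKs
          have hsl : (φ s).isLeft := by
            rcases hKs with ⟨h, _⟩ | ⟨_, h⟩
            · simp at h
            · exact h
          have hKws : K.Adj (φ w) (φ s) := by
            rw [hw]; exact Or.inr ⟨rfl, hsl⟩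
          exact hS.1 hwS hs (φ.map_rel_iff.mp hKws)
        exact ⟨v, Finset.mem_inter.mpr ⟨by simp, hvS⟩⟩
end

section
/- A graph G is 2-localizable (its vertex set partitions into exactly two strong cliques) if and only if the complement of G is a bipartite graph without isolated vertices. -/
variable {V : Type*} [Fintype V] [DecidableEq V]

lemma fin_two_other : ∀ (a b j : Fin 2), a ≠ j → b ≠ j → a = b := by decide

lemma fin_two_flip_ne : ∀ j : Fin 2, (if j = 0 then (1 : Fin 2) else 0) ≠ j := by decide

theorem two_localizable_iff_complement_bipartite (G : SimpleGraph V) [Nonempty V] :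
    (∃ C : Fin 2 → Finset V, (∀ j, IsStrongClique G (C j)) ∧ ∀ v, ∃! j, v ∈ C j) ↔
      (Gᶜ.Colorable 2 ∧ ∀ v : V, ∃ w, Gᶜ.Adj v w) := by
  classical
  constructor
  · rintro ⟨C, hstrong, hpart⟩
    constructor
    · refine ⟨⟨fun v => if v ∈ C 0 then 0 else 1, ?_⟩⟩
      intro v w hvw
      rw [SimpleGraph.compl_adj] at hvw
      intro hcol
      -- both in the same clique
      have : ∃ j, v ∈ C j ∧ w ∈ C j := by
        by_cases hv0 : v ∈ C 0 <;> by_cases hw0 : w ∈ C 0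
        · exact ⟨0, hv0, hw0⟩
        · simp [hv0, hw0] at hcol
        · simp [hv0, hw0] at hcol
        · obtain ⟨jv, hjv, _⟩ := hpart v
          obtain ⟨jw, hjw, _⟩ := hpart w
          have hjv0 : jv ≠ 0 := fun h => hv0 (h ▸ hjv)
          have hjw0 : jw ≠ 0 := fun h => hw0 (h ▸ hjw)
          exact ⟨jv, hjv, (fin_two_other jv jw 0 hjv0 hjw0) ▸ hjw⟩
      obtain ⟨j, hvj, hwj⟩ := this
      exact hvw.2 ((hstrong j).1 hvj hwj hvw.1)
    · intro v
      obtain ⟨j, hvj, huniq⟩ := hpart v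
      set j' : Fin 2 := if j = 0 then 1 else 0 with hj'
      have hjj' : j' ≠ j := fin_two_flip_ne j
      have hvind : IsIndep G {v} := by
        intro a ha b hb
        simp at ha hb
        subst ha; subst hb
        exact G.loopless.irrefl _
      obtain ⟨S, hSmax, hvS⟩ := exists_maxIndep_superset G {v} hvind
      obtain ⟨w, hw⟩ := (hstrong j').2 S hSmax
      rw [Finset.mem_inter] at hw
      have hwv : w ≠ v := by
        intro h
        exact hjj' (huniq j' (h ▸ hw.1))
      refine ⟨w, ?_⟩
      rw [SimpleGraph.compl_adj]
      exact ⟨Ne.symm hwv, hSmax.1 (hvS (Finset.mem_singleton_self v)) hw.2⟩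
  · rintro ⟨hcol, hiso⟩
    obtain ⟨c⟩ := hcol
    refine ⟨fun j => Finset.univ.filter (fun v => c v = j), fun j => ⟨?_, ?_⟩, fun v => ?_⟩
    · intro v hv w hw hne
      simp only [Finset.coe_filter, Set.mem_setOf_eq, Finset.mem_univ, true_and] at hv hw
      by_contra hadj
      exact c.valid ((SimpleGraph.compl_adj G _ _).mpr ⟨hne, hadj⟩) (hv.trans hw.symm)
    · intro S hS
      by_contra hempty
      rw [Finset.not_nonempty_iff_eq_empty] at hempty
      -- every element of S has color ≠ j
      have hcolS : ∀ s ∈ S, c s ≠ j := by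
        intro s hs hcs
        have : s ∈ Finset.univ.filter (fun v => c v = j) ∩ S := by
          simp [hcs, hs]
        rw [hempty] at this
        exact absurd this (Finset.notMem_empty s)
      -- S is nonempty
      obtain ⟨v0⟩ := (inferInstance : Nonempty V)
      have hSne : S.Nonempty := by
        by_contra h
        rw [Finset.not_nonempty_iff_eq_empty] at h
        have hind : IsIndep G {v0} := by
          intro a ha b hb
          simp at ha hb; subst ha; subst hb; exact G.loopless.irrefl _
        have := hS.2 {v0} hind (by rw [h]; exact Finset.empty_subset _)
        rw [h] at this
        simp at this
      obtain ⟨v, hvS⟩ := hSne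
      -- S = {v}
      have hSsing : ∀ s ∈ S, s = v := by
        intro s hs
        by_contra hsv
        have : c s = c v := fin_two_other _ _ j (hcolS s hs) (hcolS v hvS)
        exact c.valid ((SimpleGraph.compl_adj G _ _).mpr ⟨hsv, hS.1 hs hvS⟩) this
      obtain ⟨w, hvw⟩ := hiso v
      rw [SimpleGraph.compl_adj] at hvw
      have hcw : c w = j := by
        by_contra hcwj
        exact c.valid ((SimpleGraph.compl_adj G _ _).mpr hvw) (fin_two_other _ _ j (hcolS v hvS) hcwj)
      have hind : IsIndep G (insert w S) := by
        intro a ha b hb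
        rw [Finset.mem_insert] at ha hb
        have hav : a = w ∨ a = v := ha.imp id (hSsing a)
        have hbv : b = w ∨ b = v := hb.imp id (hSsing b)
        rcases hav with rfl | rfl <;> rcases hbv with rfl | rfl
        · exact G.loopless.irrefl _
        · intro h; exact hvw.2 (h.symm)
        · exact hvw.2
        · exact G.loopless.irrefl _
      have := hS.2 _ hind (Finset.subset_insert w S)
      have hwS : w ∈ S := this ▸ Finset.mem_insert_self w S
      exact hcolS w hwS hcw
    · refine ⟨c v, by simp, fun j hj => ?_⟩
      simp only [Finset.mem_filter, Finset.mem_univ, true_and] at hj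
      exact hj.symm
end

section
/- For a bipartite graph H with parts U and W, a vertex u is covered by every maximal matching of H (i.e., u is strong) if and only if there exists a non-empty set X ⊆ N(u) such that |N(X)| ≤ |X|. -/
variable {V : Type*} [Fintype V] [DecidableEq V]

/-- `M` is a matching in `H`: a set of pairwise disjoint edges. -/
def IsMatching (H : SimpleGraph V) (M : Set (Sym2 V)) : Prop :=
  M ⊆ H.edgeSet ∧ ∀ e ∈ M, ∀ f ∈ M, e ≠ f → ∀ v : V, ¬ (v ∈ e ∧ v ∈ f)

/-- `M` is a maximal matching in `H`. -/
def IsMaximalMatching (H : SimpleGraph V) (M : Set (Sym2 V)) : Prop :=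
  IsMatching H M ∧ ∀ M', IsMatching H M' → M ⊆ M' → M' = M

/-- The matching `M` covers the vertex `v`. -/
def MatchCovers (M : Set (Sym2 V)) (v : V) : Prop := ∃ e ∈ M, v ∈ e

/-- A vertex is strong if it is covered by every maximal matching. -/
def StrongVertex (H : SimpleGraph V) (u : V) : Prop :=
  ∀ M, IsMaximalMatching H M → MatchCovers M u

/-- The triangle on vertices `a`, `b`, `c` is strong: every maximal matching
contains one of its edges. -/
def StrongTriangle (H : SimpleGraph V) (a b c : V) : Prop :=
  ∀ M, IsMaximalMatching H M → ∃ e ∈ M, e = s(a, b) ∨ e = s(b, c) ∨ e = s(a, c)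

lemma exists_maximal_matching_ext (H : SimpleGraph V) (M : Set (Sym2 V)) (hM : IsMatching H M) :
    ∃ M', IsMaximalMatching H M' ∧ M ⊆ M' := by
  have hfin : {T : Set (Sym2 V) | IsMatching H T ∧ M ⊆ T}.Finite :=
    Set.Finite.subset (Set.Finite.finite_subsets (Set.toFinite H.edgeSet))
      (fun T hT => hT.1.1)
  obtain ⟨M', hM'mem, hmax⟩ := Set.Finite.exists_maximalFor id _ hfin ⟨M, hM, subset_rfl⟩
  exact ⟨M', ⟨hM'mem.1, fun M'' hM'' hsub =>
    Set.Subset.antisymm (hmax (j := M'') ⟨hM'', hM'mem.2.trans hsub⟩ hsub) hsub⟩, hM'mem.2⟩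

theorem strong_vertex_iff_hall_condition (H : SimpleGraph V) (U W : Set V)
    (hdisj : Disjoint U W) (hcover : U ∪ W = Set.univ)
    (hbip : ∀ x y, H.Adj x y → (x ∈ U ∧ y ∈ W) ∨ (x ∈ W ∧ y ∈ U)) (u : V) :
    StrongVertex H u ↔
      ∃ X : Set V, X.Nonempty ∧ X ⊆ {y | H.Adj u y} ∧
        {y | y ∉ X ∧ ∃ x ∈ X, H.Adj x y}.ncard ≤ X.ncard := by
  classical
  -- neighbors of `u` form an independent set
  have F : ∀ x y, H.Adj u x → H.Adj u y → ¬ H.Adj x y := by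
    intro x y hx hy hxy
    rcases hbip u x hx with ⟨huU, hxW⟩ | ⟨huW, hxU⟩
    · rcases hbip u y hy with ⟨_, hyW⟩ | ⟨huW, _⟩
      · rcases hbip x y hxy with ⟨hxU, _⟩ | ⟨_, hyU⟩
        · exact Set.disjoint_left.mp hdisj hxU hxW
        · exact Set.disjoint_left.mp hdisj hyU hyW
      · exact Set.disjoint_left.mp hdisj huU huW
    · rcases hbip u y hy with ⟨huU, _⟩ | ⟨_, hyU⟩
      · exact Set.disjoint_left.mp hdisj huU huW
      · rcases hbip x y hxy with ⟨_, hyW⟩ | ⟨hxW, _⟩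
        · exact Set.disjoint_left.mp hdisj hyU hyW
        · exact Set.disjoint_left.mp hdisj hxU hxW
  constructor
  · -- strong → Hall violated somewhere
    intro hstrong
    by_contra hno
    push_neg at hno
    -- Hall's condition for the bipartite graph N(u) vs V \ {u}
    set ι := {x : V // H.Adj u x}
    set t : ι → Finset V := fun x => Finset.univ.filter (fun y => H.Adj x.val y ∧ y ≠ u) with ht
    have hall : ∀ s : Finset ι, s.card ≤ (s.biUnion t).card := by
      intro s
      rcases s.eq_empty_or_nonempty with rfl | hsne
      · simp
      set X : Set V := Subtype.val '' (↑s : Set ι) with hX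
      set NX : Set V := {y | y ∉ X ∧ ∃ x ∈ X, H.Adj x y} with hNX
      have hXsub : X ⊆ {y | H.Adj u y} := by
        rintro y ⟨x, _, rfl⟩; exact x.prop
      have hXne : X.Nonempty := hsne.to_set.image _
      have hlt : X.ncard < NX.ncard := hno X hXne hXsub
      have hbu : (↑(s.biUnion t) : Set V) = NX \ {u} := by
        ext y
        simp only [Finset.coe_biUnion, Set.mem_iUnion, Finset.mem_coe, ht,
          Finset.mem_filter, Finset.mem_univ, true_and, Set.mem_diff,
          Set.mem_singleton_iff, hNX, Set.mem_setOf_eq]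
        constructor
        · rintro ⟨x, hxs, hadj, hyu⟩
          have hxX : x.val ∈ X := ⟨x, hxs, rfl⟩
          refine ⟨⟨?_, x.val, hxX, hadj⟩, hyu⟩
          intro hyX
          exact F _ _ x.prop (hXsub hyX) hadj
        · rintro ⟨⟨_, x, hxX, hadj⟩, hyu⟩
          obtain ⟨x', hx's, rfl⟩ := hxX
          exact ⟨x', hx's, hadj, hyu⟩
      have huNX : u ∈ NX := by
        obtain ⟨x, hxX⟩ := hXne
        exact ⟨fun h => (H.irrefl (hXsub h)), x, hxX, (hXsub hxX).symm⟩
      have h1 : s.card = X.ncard := by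
        rw [hX, Set.ncard_image_of_injective _ Subtype.val_injective, Set.ncard_coe_finset]
      have h2 : (s.biUnion t).card = (NX \ {u}).ncard := by
        rw [← Set.ncard_coe_finset, hbu]
      have h3 : (NX \ {u}).ncard + 1 = NX.ncard :=
        Set.ncard_diff_singleton_add_one huNX (Set.toFinite _)
      omega
    obtain ⟨f, hfinj, hf⟩ := (Finset.all_card_le_biUnion_card_iff_exists_injective t).mp hall
    have hf' : ∀ x : ι, H.Adj x.val (f x) ∧ f x ≠ u := by
      intro x
      have := hf x
      rw [ht] at this
      simpa using this
    have hfnadj : ∀ x : ι, ¬ H.Adj u (f x) := fun x h => F _ _ x.prop h (hf' x).1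
    set M : Set (Sym2 V) := Set.range (fun x : ι => s(x.val, f x)) with hM
    have hMmatch : IsMatching H M := by
      constructor
      · rintro e ⟨x, rfl⟩
        exact (hf' x).1
      · rintro e ⟨x, rfl⟩ e' ⟨x', rfl⟩ hne v ⟨hv1, hv2⟩
        simp only [Sym2.mem_iff] at hv1 hv2
        rcases hv1 with rfl | rfl <;> rcases hv2 with h | h
        · exact hne (by rw [Subtype.ext h])
        · exact hfnadj x' (h ▸ x.prop)
        · exact hfnadj x (h ▸ x'.prop)
        · exact hne (by rw [hfinj h])
    obtain ⟨M', hM'max, hsub⟩ := exists_maximal_matching_ext H M hMmatch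
    obtain ⟨e, heM', hue⟩ := hstrong M' hM'max
    obtain ⟨y, rfl⟩ := Sym2.mem_iff_exists.mp hue
    have hadj : H.Adj u y := hM'max.1.1 heM'
    set x : ι := ⟨y, hadj⟩
    have he'M' : s(y, f x) ∈ M' := hsub ⟨x, rfl⟩
    have hne : s(u, y) ≠ s(y, f x) := by
      intro h
      rw [Sym2.eq_iff] at h
      rcases h with ⟨rfl, _⟩ | ⟨h1, _⟩
      · exact H.irrefl hadj
      · exact (hf' x).2 h1.symm
    exact hM'max.1.2 _ heM' _ he'M' hne y ⟨Sym2.mem_mk_right u y, Sym2.mem_mk_left y (f x)⟩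
  · rintro ⟨X, hXne, hXsub, hcard⟩ M hMmax
    by_contra hcov
    set NX : Set V := {y | y ∉ X ∧ ∃ x ∈ X, H.Adj x y} with hNX
    have hpart : ∀ x ∈ X, ∃ p, s(x, p) ∈ M ∧ p ∉ X ∧ p ≠ u := by
      intro x hx
      have hux : H.Adj u x := hXsub hx
      by_cases hxcov : ∃ e ∈ M, x ∈ e
      · obtain ⟨e, heM, hxe⟩ := hxcov
        obtain ⟨p, rfl⟩ := Sym2.mem_iff_exists.mp hxe
        have hadj : H.Adj x p := hMmax.1.1 heM
        refine ⟨p, heM, ?_, ?_⟩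
        · intro hpX; exact F x p hux (hXsub hpX) hadj
        · rintro rfl
          exact hcov ⟨_, heM, Sym2.mem_mk_right x p⟩
      · exfalso
        push_neg at hxcov
        set M' : Set (Sym2 V) := insert s(u, x) M with hM'
        have hM'match : IsMatching H M' := by
          constructor
          · rintro e (rfl | he)
            · exact hux
            · exact hMmax.1.1 he
          · rintro e (rfl | he) e' (rfl | he') hne v ⟨hv1, hv2⟩
            · exact hne rfl
            · rcases Sym2.mem_iff.mp hv1 with rfl | rfl
              · exact hcov ⟨e', he', hv2⟩
              · exact hxcov e' he' hv2
            · rcases Sym2.mem_iff.mp hv2 with rfl | rfl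
              · exact hcov ⟨e, he, hv1⟩
              · exact hxcov e he hv1
            · exact hMmax.1.2 e he e' he' hne v ⟨hv1, hv2⟩
        have heq := hMmax.2 M' hM'match (Set.subset_insert _ _)
        exact hcov ⟨s(u, x), heq ▸ Set.mem_insert _ _, Sym2.mem_mk_left u x⟩
    have hpart' : ∀ x, ∃ p, x ∈ X → s(x, p) ∈ M ∧ p ∉ X ∧ p ≠ u := by
      intro x
      by_cases hx : x ∈ X
      · obtain ⟨p, hp⟩ := hpart x hx; exact ⟨p, fun _ => hp⟩
      · exact ⟨x, fun h => absurd h hx⟩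
    choose f hfp using hpart'
    have hmaps : ∀ x ∈ X, f x ∈ NX \ {u} := by
      intro x hx
      obtain ⟨hmem, hnX, hnu⟩ := hfp x hx
      exact ⟨⟨hnX, x, hx, hMmax.1.1 hmem⟩, hnu⟩
    have hinj : Set.InjOn f X := by
      intro x hx x' hx' heq
      obtain ⟨hmem, hnX, _⟩ := hfp x hx
      obtain ⟨hmem', _, _⟩ := hfp x' hx'
      by_cases hee : s(x, f x) = s(x', f x')
      · rw [Sym2.eq_iff] at hee
        rcases hee with ⟨h1, _⟩ | ⟨h1, h2⟩
        · exact h1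
        · exact absurd (h2 ▸ hx') hnX
      · exact absurd ⟨heq ▸ Sym2.mem_mk_right x (f x), Sym2.mem_mk_right x' (f x')⟩
          (hMmax.1.2 _ hmem _ hmem' hee (f x'))
    have huNX : u ∈ NX := by
      obtain ⟨x, hxX⟩ := hXne
      exact ⟨fun h => (H.irrefl (hXsub h)), x, hxX, (hXsub hxX).symm⟩
    have h1 : X.ncard ≤ (NX \ {u}).ncard :=
      Set.ncard_le_ncard_of_injOn f hmaps hinj (Set.toFinite _)
    have h2 : (NX \ {u}).ncard + 1 = NX.ncard :=
      Set.ncard_diff_singleton_add_one huNX (Set.toFinite _)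
    omega
end

section
/- A triangle T in a graph H is strong (every maximal matching of H contains an edge of T) if and only if T is not contained in any bull, where a bull consists of T together with two disjoint edges each incident to a distinct vertex of T and otherwise disjoint from T. -/
variable {V : Type*} [Fintype V] [DecidableEq V]

/-- Every matching extends to a maximal matching. -/
lemma exists_maximal_matching_superset (H : SimpleGraph V) (M₀ : Set (Sym2 V))
    (h₀ : IsMatching H M₀) : ∃ M, M₀ ⊆ M ∧ IsMaximalMatching H M := by
  obtain ⟨M, hM₀, hMmem, hMmax⟩ :=
    zorn_subset_nonempty {M | IsMatching H M}
      (fun c hcS hchain hcne => by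
        refine ⟨⋃₀ c, ⟨?_, ?_⟩, fun s hs => Set.subset_sUnion_of_mem hs⟩
        · rintro e ⟨s, hs, hes⟩
          exact (hcS hs).1 hes
        · rintro e ⟨s, hs, hes⟩ f ⟨t, ht, hft⟩ hef v
          rcases hchain.total hs ht with hst | hts
          · exact (hcS ht).2 e (hst hes) f hft hef v
          · exact (hcS hs).2 e hes f (hts hft) hef v) M₀ h₀
  exact ⟨M, hM₀, hMmem, fun M' hM' hsub => subset_antisymm (hMmax hM' hsub) hsub⟩

theorem strong_triangle_iff_no_bull (H : SimpleGraph V) (a b c : V)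
    (hab : H.Adj a b) (hbc : H.Adj b c) (hac : H.Adj a c) :
    StrongTriangle H a b c ↔
      ¬ ∃ x y d e : V, x ∈ ({a, b, c} : Set V) ∧ y ∈ ({a, b, c} : Set V) ∧ x ≠ y ∧
        d ∉ ({a, b, c} : Set V) ∧ e ∉ ({a, b, c} : Set V) ∧ d ≠ e ∧
        H.Adj x d ∧ H.Adj y e := by
  constructor
  · rintro hstrong ⟨x, y, d, e, hx, hy, hxy, hd, he, hde, hxd, hye⟩
    have hne : s(x, d) ≠ s(y, e) := by
      intro h
      rw [Sym2.eq_iff] at h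
      rcases h with ⟨h1, h2⟩ | ⟨h1, h2⟩
      · exact hxy h1
      · subst h1; subst h2; exact hd hy
    have hM₀ : IsMatching H {s(x, d), s(y, e)} := by
      refine ⟨?_, ?_⟩
      · rintro f (rfl | rfl)
        · exact hxd
        · exact hye
      · rintro f (rfl | rfl) g (rfl | rfl) hfg v ⟨hvf, hvg⟩ <;>
          simp only [Sym2.mem_iff] at hvf hvg
        · exact hfg rfl
        · rcases hvf with rfl | rfl <;> rcases hvg with h | h
          · exact hxy h
          · exact he (h ▸ hx)
          · exact hd (h ▸ hy)
          · exact hde h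
        · rcases hvf with rfl | rfl <;> rcases hvg with h | h
          · exact hxy h.symm
          · exact hd (h ▸ hy)
          · exact he (h ▸ hx)
          · exact hde h.symm
        · exact hfg rfl
    obtain ⟨M, hsub, hMmax⟩ := exists_maximal_matching_superset H _ hM₀
    obtain ⟨t, htM, ht⟩ := hstrong M hMmax
    have hEt : ∀ u ∈ t, u ∈ ({a, b, c} : Set V) := by
      rcases ht with rfl | rfl | rfl <;> intro u hu <;>
        rcases Sym2.mem_iff.mp hu with rfl | rfl <;> simp
    have htxy : x ∈ t ∨ y ∈ t := by
      rcases ht with rfl | rfl | rfl <;>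
        rcases hx with rfl | rfl | rfl <;> rcases hy with rfl | rfl | rfl <;>
        simp_all [Sym2.mem_iff]
    rcases htxy with hxt | hyt
    · have htne : t ≠ s(x, d) := by
        rintro rfl
        exact hd (hEt d (by simp))
      exact hMmax.1.2 t htM (s(x, d)) (hsub (by simp)) htne x ⟨hxt, by simp⟩
    · have htne : t ≠ s(y, e) := by
        rintro rfl
        exact he (hEt e (by simp))
      exact hMmax.1.2 t htM (s(y, e)) (hsub (by simp)) htne y ⟨hyt, by simp⟩
  · intro hnobull M hM
    by_contra hno
    push_neg at hno
    have hadd' : ∀ u v : V, H.Adj u v → ¬ MatchCovers M u → ¬ MatchCovers M v →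
        s(u, v) ∈ M := by
      intro u v huv hcu hcv
      have hM' : IsMatching H (insert s(u, v) M) := by
        refine ⟨?_, ?_⟩
        · rintro f (rfl | hf)
          · exact huv
          · exact hM.1.1 hf
        · rintro f (rfl | hf) g (rfl | hg) hfg w ⟨hwf, hwg⟩
          · exact hfg rfl
          · rcases Sym2.mem_iff.mp hwf with rfl | rfl
            · exact hcu ⟨g, hg, hwg⟩
            · exact hcv ⟨g, hg, hwg⟩
          · rcases Sym2.mem_iff.mp hwg with rfl | rfl
            · exact hcu ⟨f, hf, hwf⟩
            · exact hcv ⟨f, hf, hwf⟩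
          · exact hM.1.2 f hf g hg hfg w ⟨hwf, hwg⟩
      have := hM.2 _ hM' (Set.subset_insert _ _)
      rw [← this]
      exact Set.mem_insert _ _
    have hpartner : ∀ x ∈ ({a, b, c} : Set V), MatchCovers M x →
        ∃ d, d ∉ ({a, b, c} : Set V) ∧ s(x, d) ∈ M := by
      rintro x hx ⟨f, hfM, hxf⟩
      obtain ⟨d, rfl⟩ := Sym2.mem_iff_exists.mp hxf
      refine ⟨d, ?_, hfM⟩
      intro hd'
      have hadjxd : H.Adj x d := hM.1.1 hfM
      have hxd : x ≠ d := hadjxd.ne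
      obtain ⟨h1, h2, h3⟩ := hno s(x, d) hfM
      rcases hx with rfl | rfl | rfl <;> rcases hd' with rfl | rfl | rfl <;>
        first
          | exact hxd rfl
          | exact h1 rfl
          | exact h2 rfl
          | exact h3 rfl
          | exact h1 Sym2.eq_swap
          | exact h2 Sym2.eq_swap
          | exact h3 Sym2.eq_swap
    have hcov2 : ∃ x ∈ ({a, b, c} : Set V), ∃ y ∈ ({a, b, c} : Set V), x ≠ y ∧
        MatchCovers M x ∧ MatchCovers M y := by
      by_cases ca : MatchCovers M a <;> by_cases cb : MatchCovers M b <;>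
        by_cases cc : MatchCovers M c
      · exact ⟨a, by simp, b, by simp, hab.ne, ca, cb⟩
      · exact ⟨a, by simp, b, by simp, hab.ne, ca, cb⟩
      · exact ⟨a, by simp, c, by simp, hac.ne, ca, cc⟩
      · exact absurd (hno _ (hadd' b c hbc cb cc)).2.1 (by simp)
      · exact ⟨b, by simp, c, by simp, hbc.ne, cb, cc⟩
      · exact absurd (hno _ (hadd' a c hac ca cc)).2.2 (by simp)
      · exact absurd (hno _ (hadd' a b hab ca cb)).1 (by simp)
      · exact absurd (hno _ (hadd' a b hab ca cb)).1 (by simp)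
    obtain ⟨x, hx, y, hy, hxy, hcx, hcy⟩ := hcov2
    obtain ⟨d, hd, hxdM⟩ := hpartner x hx hcx
    obtain ⟨e, he, hyeM⟩ := hpartner y hy hcy
    have hne : s(x, d) ≠ s(y, e) := by
      intro h
      rw [Sym2.eq_iff] at h
      rcases h with ⟨h1, h2⟩ | ⟨h1, h2⟩
      · exact hxy h1
      · subst h1; subst h2; exact hd hy
    have hde : d ≠ e := by
      rintro rfl
      exact hM.1.2 _ hxdM _ hyeM hne d ⟨by simp, by simp⟩
    exact hnobull ⟨x, y, d, e, hx, hy, hxy, hd, he, hde, hM.1.1 hxdM, hM.1.1 hyeM⟩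
end

section
/- The line graph L(H) of a graph H is localizable if and only if H contains an independent set S of strong vertices and a set of strong triangles that decomposes H − S (each edge of H − S lies in exactly one of these triangles). -/
variable {V : Type*} [Fintype V] [DecidableEq V]

section SetVersion

variable {W : Type*}

/-- `S` is an independent set in `G` (set version). -/
def IsIndepSet (G : SimpleGraph W) (S : Set W) : Prop :=
  ∀ u ∈ S, ∀ v ∈ S, ¬ G.Adj u v

/-- `S` is a maximal independent set in `G` (set version). -/
def MaxIndepSet (G : SimpleGraph W) (S : Set W) : Prop :=
  IsIndepSet G S ∧ ∀ T, IsIndepSet G T → S ⊆ T → T = S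

/-- `K` is a strong clique in `G` (set version). -/
def StrongCliqueSet (G : SimpleGraph W) (K : Set W) : Prop :=
  G.IsClique K ∧ ∀ S, MaxIndepSet G S → (K ∩ S).Nonempty

/-- `G` is localizable: its vertex set partitions into strong cliques (set version). -/
def LocalizableSet (G : SimpleGraph W) : Prop :=
  ∃ P : Set (Set W), (∀ K ∈ P, StrongCliqueSet G K) ∧ ∀ v, ∃! K, K ∈ P ∧ v ∈ K

end SetVersion


set_option linter.unusedSectionVars false


lemma lineGraph_adj_iff (H : SimpleGraph V) (e f : H.edgeSet) :
    H.lineGraph.Adj e f ↔ e ≠ f ∧ ∃ v, v ∈ (e : Sym2 V) ∧ v ∈ (f : Sym2 V) :=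
  SimpleGraph.lineGraph_adj_iff_exists

-- image of lift
lemma image_lift (H : SimpleGraph V) (M : Set (Sym2 V)) (hM : M ⊆ H.edgeSet) :
    Subtype.val '' {e : H.edgeSet | ↑e ∈ M} = M := by
  ext x
  simp only [Set.mem_image, Set.mem_setOf_eq]
  constructor
  · rintro ⟨e, he, rfl⟩; exact he
  · intro hx; exact ⟨⟨x, hM hx⟩, hx, rfl⟩

lemma indep_iff_matching (H : SimpleGraph V) (S' : Set H.edgeSet) :
    IsIndepSet H.lineGraph S' ↔ IsMatching H (Subtype.val '' S') := by
  constructor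
  · intro h
    refine ⟨?_, ?_⟩
    · rintro x ⟨e, he, rfl⟩; exact e.2
    · rintro x ⟨e, he, rfl⟩ y ⟨f, hf, rfl⟩ hne v ⟨hv1, hv2⟩
      exact h e he f hf ((lineGraph_adj_iff H e f).2
        ⟨fun hh => hne (by rw [hh]), v, hv1, hv2⟩)
  · intro h e he f hf hadj
    obtain ⟨hne, v, hv1, hv2⟩ := (lineGraph_adj_iff H e f).1 hadj
    exact h.2 e ⟨e, he, rfl⟩ f ⟨f, hf, rfl⟩
      (fun hh => hne (Subtype.ext hh)) v ⟨hv1, hv2⟩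

lemma maxIndep_iff_maximalMatching (H : SimpleGraph V) (S' : Set H.edgeSet) :
    MaxIndepSet H.lineGraph S' ↔ IsMaximalMatching H (Subtype.val '' S') := by
  constructor
  · rintro ⟨hind, hmax⟩
    refine ⟨(indep_iff_matching H S').1 hind, ?_⟩
    intro M' hM' hsub
    have h1 : Subtype.val '' {e : H.edgeSet | ↑e ∈ M'} = M' := image_lift H M' hM'.1
    have h2 : IsIndepSet H.lineGraph {e : H.edgeSet | ↑e ∈ M'} := by
      rw [indep_iff_matching, h1]; exact hM'
    have h3 : S' ⊆ {e : H.edgeSet | ↑e ∈ M'} := fun e he => hsub ⟨e, he, rfl⟩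
    rw [← h1, hmax _ h2 h3]
  · rintro ⟨hmat, hmax⟩
    refine ⟨(indep_iff_matching H S').2 hmat, ?_⟩
    intro T hT hsub
    have := hmax _ ((indep_iff_matching H T).1 hT) (Set.image_mono hsub)
    exact Set.image_injective.2 Subtype.val_injective this

lemma maximalMatching_lift (H : SimpleGraph V) (M : Set (Sym2 V))
    (hM : IsMaximalMatching H M) : MaxIndepSet H.lineGraph {e : H.edgeSet | ↑e ∈ M} := by
  rw [maxIndep_iff_maximalMatching, image_lift H M hM.1.1]; exact hM

-- existence of maximal independent set in the line graph
lemma exists_maxIndep_s17 (H : SimpleGraph V) : ∃ S', MaxIndepSet H.lineGraph S' := by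
  obtain ⟨M, hM, -⟩ := exists_maximal_matching_ext H ∅
    ⟨Set.empty_subset _, fun e he => absurd he (Set.notMem_empty e)⟩
  exact ⟨_, maximalMatching_lift H M hM⟩

lemma edge_repr (H : SimpleGraph V) (e : Sym2 V) (he : e ∈ H.edgeSet) :
    ∃ a b, H.Adj a b ∧ e = s(a, b) := by
  induction e using Sym2.ind with
  | _ a b => exact ⟨a, b, he, rfl⟩


lemma two_mem (e : Sym2 V) {a c : V} (h : a ≠ c) (ha : a ∈ e) (hc : c ∈ e) : e = s(a, c) :=
  (Sym2.mem_and_mem_iff h).1 ⟨ha, hc⟩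

lemma helly (H : SimpleGraph V) (K : Set (Sym2 V)) (hK : K ⊆ H.edgeSet)
    (hcl : ∀ e ∈ K, ∀ f ∈ K, e ≠ f → ∃ v, v ∈ e ∧ v ∈ f) (hne : K.Nonempty) :
    (∃ a, ∀ e ∈ K, a ∈ e) ∨
    (∃ a b c : V, H.Adj a b ∧ H.Adj b c ∧ H.Adj a c ∧ K = {s(a, b), s(b, c), s(a, c)}) := by
  by_cases hcom : ∃ a, ∀ e ∈ K, a ∈ e
  · exact Or.inl hcom
  right
  push_neg at hcom
  obtain ⟨e1, he1⟩ := hne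
  obtain ⟨a, b, hab, rfl⟩ := edge_repr H e1 (hK he1)
  have hab' : a ≠ b := hab.ne
  -- an edge missing a
  obtain ⟨e2, he2, ha2⟩ := hcom a
  have hne12 : s(a, b) ≠ e2 := fun h => ha2 (h ▸ Sym2.mem_mk_left a b)
  obtain ⟨v, hv1, hv2⟩ := hcl _ he1 e2 he2 hne12
  have hvb : v = b := (Sym2.mem_iff.1 hv1).resolve_left (fun h => ha2 (h ▸ hv2))
  subst hvb
  obtain ⟨x, y, hxy, rfl⟩ := edge_repr H e2 (hK he2)
  -- e2 = s(x,y) contains v = b, not a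
  have hbxy : v = x ∨ v = y := Sym2.mem_iff.1 hv2
  -- wlog e2 = s(v, c)
  obtain ⟨c, hvc, he2eq⟩ : ∃ c, H.Adj v c ∧ s(x, y) = s(v, c) := by
    rcases hbxy with rfl | rfl
    · exact ⟨y, hxy, rfl⟩
    · exact ⟨x, hxy.symm, Sym2.eq_swap⟩
  rw [he2eq] at he2 ha2
  have hac : a ≠ c := fun h => ha2 (h ▸ Sym2.mem_mk_right v c)
  have hvc' : v ≠ c := hvc.ne
  -- an edge missing b(=v)
  obtain ⟨e3, he3, hb3⟩ := hcom v
  have hne13 : s(a, v) ≠ e3 := fun h => hb3 (h ▸ Sym2.mem_mk_right a v)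
  have hne23 : s(v, c) ≠ e3 := fun h => hb3 (h ▸ Sym2.mem_mk_left v c)
  obtain ⟨w, hw1, hw3⟩ := hcl _ he1 e3 he3 hne13
  have hwa : w = a := (Sym2.mem_iff.1 hw1).resolve_right (fun h => hb3 (h ▸ hw3))
  subst hwa
  obtain ⟨z, hz2, hz3⟩ := hcl _ he2 e3 he3 hne23
  have hzc : z = c := (Sym2.mem_iff.1 hz2).resolve_left (fun h => hb3 (h ▸ hz3))
  subst hzc
  have he3eq : e3 = s(w, z) := two_mem e3 hac hw3 hz3
  subst he3eq
  refine ⟨w, v, z, hab, hvc, hK he3, ?_⟩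
  ext f
  simp only [Set.mem_insert_iff, Set.mem_singleton_iff]
  constructor
  · intro hf
    by_cases hfa : w ∈ f
    · by_cases hfb : v ∈ f
      · exact Or.inl (two_mem f hab' hfa hfb)
      · -- f shares with e2 = s(v,c), not via v
        have hnef2 : f ≠ s(v, z) := fun h => hfb (h ▸ Sym2.mem_mk_left v z)
        obtain ⟨p, hp1, hp2⟩ := hcl _ hf _ he2 hnef2
        have : p = z := (Sym2.mem_iff.1 hp2).resolve_left (fun h => hfb (h ▸ hp1))
        subst this
        exact Or.inr (Or.inr (two_mem f hac hfa hp1))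
    · -- f misses a; shares with e1 and e3
      have hnef1 : f ≠ s(w, v) := fun h => hfa (h ▸ Sym2.mem_mk_left w v)
      obtain ⟨p, hp1, hp2⟩ := hcl _ hf _ he1 hnef1
      have hpb : p = v := (Sym2.mem_iff.1 hp2).resolve_left (fun h => hfa (h ▸ hp1))
      subst hpb
      have hnef3 : f ≠ s(w, z) := fun h => hfa (h ▸ Sym2.mem_mk_left w z)
      obtain ⟨q, hq1, hq2⟩ := hcl _ hf _ he3 hnef3
      have hqc : q = z := (Sym2.mem_iff.1 hq2).resolve_left (fun h => hfa (h ▸ hq1))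
      subst hqc
      exact Or.inr (Or.inl (two_mem f hvc' hp1 hq1))
  · rintro (rfl | rfl | rfl)
    · exact he1
    · exact he2
    · exact he3


lemma star_closed (H : SimpleGraph V) (K : Set H.edgeSet)
    (hstrong : ∀ S', MaxIndepSet H.lineGraph S' → (K ∩ S').Nonempty)
    (a : V) (ha : ∀ f ∈ K, a ∈ (f : Sym2 V)) (e : H.edgeSet) (hae : a ∈ (e : Sym2 V)) :
    e ∈ K := by
  have hm : IsMatching H {(e : Sym2 V)} :=
    ⟨Set.singleton_subset_iff.2 e.2, fun x hx y hy hne v _ => hne (hx.trans hy.symm)⟩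
  obtain ⟨M, hM, hsub⟩ := exists_maximal_matching_ext H _ hm
  obtain ⟨f, hfK, hfM⟩ := hstrong _ (maximalMatching_lift H M hM)
  have heM : (e : Sym2 V) ∈ M := hsub rfl
  by_cases hef : (e : Sym2 V) = (f : Sym2 V)
  · rwa [Subtype.ext hef]
  · exact absurd ⟨hae, ha f hfK⟩ (hM.1.2 _ heM _ hfM hef a)

/-- Is a star class: has a common vertex. -/
def IsStarClass (H : SimpleGraph V) (K : Set H.edgeSet) : Prop :=
  ∃ a, ∀ f ∈ K, a ∈ (f : Sym2 V)

lemma clique_pairwise (H : SimpleGraph V) (K : Set H.edgeSet) (hc : H.lineGraph.IsClique K) :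
    ∀ e ∈ Subtype.val '' K, ∀ f ∈ Subtype.val '' K, e ≠ f → ∃ v, v ∈ e ∧ v ∈ f := by
  rintro e ⟨e', he', rfl⟩ f ⟨f', hf', rfl⟩ hne
  obtain ⟨-, v, hv1, hv2⟩ :=
    (lineGraph_adj_iff H e' f').1 (hc he' hf' (fun h => hne (by rw [h])))
  exact ⟨v, hv1, hv2⟩

lemma triangle_class (H : SimpleGraph V) (K : Set H.edgeSet)
    (hcl : StrongCliqueSet H.lineGraph K) (hns : ¬ IsStarClass H K) :
    ∃ a b c : V, H.Adj a b ∧ H.Adj b c ∧ H.Adj a c ∧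
      Subtype.val '' K = {s(a, b), s(b, c), s(a, c)} := by
  obtain ⟨S₀, hS₀⟩ := exists_maxIndep_s17 H
  obtain ⟨f₀, hf₀, -⟩ := hcl.2 S₀ hS₀
  have hne : (Subtype.val '' K).Nonempty := ⟨f₀, f₀, hf₀, rfl⟩
  have hsub : Subtype.val '' K ⊆ H.edgeSet := by rintro x ⟨e, -, rfl⟩; exact e.2
  rcases helly H _ hsub (clique_pairwise H K hcl.1) hne with ⟨a, ha⟩ | h
  · exact absurd ⟨a, fun f hf => ha f ⟨f, hf, rfl⟩⟩ hns
  · exact h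

lemma sym2_cases {u v a b c : V} (hab : a ≠ b) (hbc : b ≠ c) (hac : a ≠ c)
    (hu : u = a ∨ u = b ∨ u = c) (hv : v = a ∨ v = b ∨ v = c) (huv : u ≠ v) :
    s(u, v) = s(a, b) ∨ s(u, v) = s(b, c) ∨ s(u, v) = s(a, c) := by
  rcases hu with rfl | rfl | rfl <;> rcases hv with rfl | rfl | rfl <;>
    simp_all [Sym2.eq_iff]

lemma forward (H : SimpleGraph V) (hL : LocalizableSet H.lineGraph) :
    ∃ S : Set V,
        (∀ u ∈ S, ∀ v ∈ S, ¬ H.Adj u v) ∧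
        (∀ u ∈ S, StrongVertex H u) ∧
        ∃ TS : Set (Set V),
          (∀ T ∈ TS, ∃ a b c : V, T = {a, b, c} ∧
              a ∉ S ∧ b ∉ S ∧ c ∉ S ∧
              H.Adj a b ∧ H.Adj b c ∧ H.Adj a c ∧ StrongTriangle H a b c) ∧
          ∀ u v : V, H.Adj u v → u ∉ S → v ∉ S →
            ∃! T, T ∈ TS ∧ u ∈ T ∧ v ∈ T := by
  classical
  obtain ⟨P, hPs, hPp⟩ := hL
  set S : Set V :=
    {a : V | ∃ (K : Set H.edgeSet) (h : IsStarClass H K), K ∈ P ∧ a = h.choose} with hSdef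
  -- each member of S is a common vertex of its (unique star) class
  have hScom : ∀ a ∈ S, ∃ K ∈ P, (∀ f ∈ K, a ∈ (f : Sym2 V)) := by
    rintro a ⟨K, h, hKP, rfl⟩
    exact ⟨K, hKP, h.choose_spec⟩
  -- vertices of non-star classes are not in S
  have hTnotS : ∀ K ∈ P, ¬ IsStarClass H K → ∀ f ∈ K, ∀ x ∈ (f : Sym2 V), x ∉ S := by
    intro K hKP hns f hfK x hxf hxS
    obtain ⟨K', hK'P, hcom⟩ := hScom x hxS
    have hfK' : f ∈ K' := star_closed H K' (hPs K' hK'P).2 x hcom f hxf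
    have : K = K' := by
      obtain ⟨W, -, hWuniq⟩ := hPp f
      rw [hWuniq K ⟨hKP, hfK⟩, hWuniq K' ⟨hK'P, hfK'⟩]
    exact hns ⟨x, this ▸ hcom⟩
  refine ⟨S, ?_, ?_, ?_⟩
  · -- independence
    rintro a ⟨K1, h1, hK1, rfl⟩ b ⟨K2, h2, hK2, rfl⟩ hadj
    set e : H.edgeSet := ⟨s(h1.choose, h2.choose), H.mem_edgeSet.2 hadj⟩ with hedf
    have hval : (e : Sym2 V) = s(h1.choose, h2.choose) := rfl
    have he1 : e ∈ K1 := star_closed H K1 (hPs K1 hK1).2 _ h1.choose_spec e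
      (by rw [hval]; exact Sym2.mem_mk_left _ _)
    have he2 : e ∈ K2 := star_closed H K2 (hPs K2 hK2).2 _ h2.choose_spec e
      (by rw [hval]; exact Sym2.mem_mk_right _ _)
    have hKK : K1 = K2 := by
      obtain ⟨W, -, hWuniq⟩ := hPp e
      rw [hWuniq K1 ⟨hK1, he1⟩, hWuniq K2 ⟨hK2, he2⟩]
    subst hKK
    exact hadj.ne (congrArg Exists.choose (Subsingleton.elim h1 h2))
  · -- strong vertices
    rintro a ⟨K, h, hKP, rfl⟩ M hM
    obtain ⟨f, hfK, hfM⟩ := (hPs K hKP).2 _ (maximalMatching_lift H M hM)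
    exact ⟨f, hfM, h.choose_spec f hfK⟩
  · -- triangles
    refine ⟨{T | ∃ K ∈ P, ¬ IsStarClass H K ∧ T = {v | ∃ f ∈ K, v ∈ (f : Sym2 V)}}, ?_, ?_⟩
    · rintro T ⟨K, hKP, hns, rfl⟩
      obtain ⟨a, b, c, hab, hbc, hac, hKeq⟩ := triangle_class H K (hPs K hKP) hns
      have hvs : {v | ∃ f ∈ K, v ∈ (f : Sym2 V)} = {a, b, c} := by
        ext x
        simp only [Set.mem_setOf_eq, Set.mem_insert_iff, Set.mem_singleton_iff]
        constructor
        · rintro ⟨f, hfK, hxf⟩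
          have : (f : Sym2 V) ∈ ({s(a, b), s(b, c), s(a, c)} : Set (Sym2 V)) :=
            hKeq ▸ ⟨f, hfK, rfl⟩
          rcases this with h | h | h <;> rw [h] at hxf <;>
            rcases Sym2.mem_iff.1 hxf with h' | h' <;> tauto
        · have hmem : ∀ z : Sym2 V, z ∈ ({s(a, b), s(b, c), s(a, c)} : Set (Sym2 V)) →
              ∃ f ∈ K, (f : Sym2 V) = z := by
            intro z hz
            have : z ∈ Subtype.val '' K := hKeq ▸ hz
            obtain ⟨f, hf, rfl⟩ := this
            exact ⟨f, hf, rfl⟩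
          rintro (hx | hx | hx)
          · obtain ⟨f, hf, hfe⟩ := hmem s(a, b) (by simp)
            exact ⟨f, hf, by rw [hx, hfe]; exact Sym2.mem_mk_left _ _⟩
          · obtain ⟨f, hf, hfe⟩ := hmem s(a, b) (by simp)
            exact ⟨f, hf, by rw [hx, hfe]; exact Sym2.mem_mk_right _ _⟩
          · obtain ⟨f, hf, hfe⟩ := hmem s(b, c) (by simp)
            exact ⟨f, hf, by rw [hx, hfe]; exact Sym2.mem_mk_right _ _⟩
      refine ⟨a, b, c, hvs, ?_, ?_, ?_, hab, hbc, hac, ?_⟩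
      · obtain ⟨f, hf, hfe⟩ : ∃ f ∈ K, (f : Sym2 V) = s(a, b) := by
          have : s(a,b) ∈ Subtype.val '' K := hKeq ▸ (by simp)
          obtain ⟨f, hf, h'⟩ := this; exact ⟨f, hf, h'⟩
        exact hTnotS K hKP hns f hf a (by rw [hfe]; exact Sym2.mem_mk_left _ _)
      · obtain ⟨f, hf, hfe⟩ : ∃ f ∈ K, (f : Sym2 V) = s(a, b) := by
          have : s(a,b) ∈ Subtype.val '' K := hKeq ▸ (by simp)
          obtain ⟨f, hf, h'⟩ := this; exact ⟨f, hf, h'⟩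
        exact hTnotS K hKP hns f hf b (by rw [hfe]; exact Sym2.mem_mk_right _ _)
      · obtain ⟨f, hf, hfe⟩ : ∃ f ∈ K, (f : Sym2 V) = s(b, c) := by
          have : s(b,c) ∈ Subtype.val '' K := hKeq ▸ (by simp)
          obtain ⟨f, hf, h'⟩ := this; exact ⟨f, hf, h'⟩
        exact hTnotS K hKP hns f hf c (by rw [hfe]; exact Sym2.mem_mk_right _ _)
      · -- strong triangle
        intro M hM
        obtain ⟨f, hfK, hfM⟩ := (hPs K hKP).2 _ (maximalMatching_lift H M hM)
        have : (f : Sym2 V) ∈ ({s(a, b), s(b, c), s(a, c)} : Set (Sym2 V)) :=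
          hKeq ▸ ⟨f, hfK, rfl⟩
        exact ⟨f, hfM, by simpa using this⟩
    · -- decomposition
      intro u v hadj huS hvS
      set e : H.edgeSet := ⟨s(u, v), H.mem_edgeSet.2 hadj⟩ with hedef
      obtain ⟨K, ⟨hKP, heK⟩, hKuniq⟩ := hPp e
      have hns : ¬ IsStarClass H K := by
        intro hstar
        have haS : hstar.choose ∈ S := ⟨K, hstar, hKP, rfl⟩
        have hmem : hstar.choose ∈ (e : Sym2 V) := hstar.choose_spec e heK
        have hval : (e : Sym2 V) = s(u, v) := rfl
        rw [hval] at hmem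
        rcases Sym2.mem_iff.1 hmem with h | h
        · exact huS (h ▸ haS)
        · exact hvS (h ▸ haS)
      refine ⟨{x | ∃ f ∈ K, x ∈ (f : Sym2 V)}, ⟨⟨K, hKP, hns, rfl⟩,
        ⟨e, heK, by show u ∈ (e : Sym2 V); exact Sym2.mem_mk_left _ _⟩,
        ⟨e, heK, by show v ∈ (e : Sym2 V); exact Sym2.mem_mk_right _ _⟩⟩, ?_⟩
      rintro T' ⟨⟨K', hK'P, hns', rfl⟩, huT', hvT'⟩
      obtain ⟨a, b, c, hab, hbc, hac, hKeq'⟩ := triangle_class H K' (hPs K' hK'P) hns'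
      have hvs' : ∀ x, (∃ f ∈ K', x ∈ (f : Sym2 V)) → x = a ∨ x = b ∨ x = c := by
        rintro x ⟨f, hfK, hxf⟩
        have : (f : Sym2 V) ∈ ({s(a, b), s(b, c), s(a, c)} : Set (Sym2 V)) :=
          hKeq' ▸ ⟨f, hfK, rfl⟩
        rcases this with h | h | h <;> rw [h] at hxf <;>
          rcases Sym2.mem_iff.1 hxf with h' | h' <;> tauto
      have hsuv : s(u, v) ∈ ({s(a, b), s(b, c), s(a, c)} : Set (Sym2 V)) := by
        rcases sym2_cases hab.ne hbc.ne hac.ne (hvs' u huT') (hvs' v hvT') hadj.ne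
          with h | h | h <;> simp [h]
      have heK' : e ∈ K' := by
        have : s(u, v) ∈ Subtype.val '' K' := hKeq' ▸ hsuv
        obtain ⟨f, hf, hfe⟩ := this
        have : f = e := Subtype.ext hfe
        rwa [← this]
      rw [hKuniq K' ⟨hK'P, heK'⟩]

lemma pigeon {a b c u1 v1 u2 v2 : V}
    (hu1 : u1 = a ∨ u1 = b ∨ u1 = c) (hv1 : v1 = a ∨ v1 = b ∨ v1 = c)
    (hu2 : u2 = a ∨ u2 = b ∨ u2 = c) (hv2 : v2 = a ∨ v2 = b ∨ v2 = c)
    (hne1 : u1 ≠ v1) (hne2 : u2 ≠ v2) (h11 : u1 ≠ u2) (h12 : u1 ≠ v2)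
    (h21 : v1 ≠ u2) (h22 : v1 ≠ v2) : False := by
  have hsub : ({u1, v1, u2, v2} : Finset V) ⊆ {a, b, c} := by
    intro x hx
    simp only [Finset.mem_insert, Finset.mem_singleton] at hx ⊢
    rcases hx with h|h|h|h <;> subst h <;> tauto
  have c4 : ({u1, v1, u2, v2} : Finset V).card = 4 := by
    rw [Finset.card_insert_of_notMem (by simp [hne1, h11, h12]),
        Finset.card_insert_of_notMem (by simp [h21, h22]),
        Finset.card_insert_of_notMem (by simp [hne2]), Finset.card_singleton]
  have c3 : ({a, b, c} : Finset V).card ≤ 3 := by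
    refine (Finset.card_insert_le _ _).trans (Nat.succ_le_succ ?_)
    refine (Finset.card_insert_le _ _).trans (Nat.succ_le_succ ?_)
    simp
  have := Finset.card_le_card hsub
  omega

lemma backward (H : SimpleGraph V) (S : Set V)
    (hind : ∀ u ∈ S, ∀ v ∈ S, ¬ H.Adj u v)
    (hstr : ∀ u ∈ S, StrongVertex H u)
    (TS : Set (Set V))
    (hTS : ∀ T ∈ TS, ∃ a b c : V, T = {a, b, c} ∧
        a ∉ S ∧ b ∉ S ∧ c ∉ S ∧
        H.Adj a b ∧ H.Adj b c ∧ H.Adj a c ∧ StrongTriangle H a b c)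
    (hdec : ∀ u v : V, H.Adj u v → u ∉ S → v ∉ S → ∃! T, T ∈ TS ∧ u ∈ T ∧ v ∈ T) :
    LocalizableSet H.lineGraph := by
  classical
  set star : V → Set H.edgeSet := fun v => {e | v ∈ (e : Sym2 V)} with hstar
  set tri : Set V → Set H.edgeSet := fun T => {e | ∀ x ∈ (e : Sym2 V), x ∈ T} with htri
  refine ⟨{K | (∃ v ∈ S, K = star v) ∨ (∃ T ∈ TS, K = tri T)}, ?_, ?_⟩
  · rintro K (⟨v, hvS, rfl⟩ | ⟨T, hTTS, rfl⟩)
    · constructor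
      · -- star is a clique
        intro e he f hf hne
        exact (lineGraph_adj_iff H e f).2 ⟨hne, v, he, hf⟩
      · -- star is strong
        intro S' hS'
        have hmm : IsMaximalMatching H (Subtype.val '' S') :=
          (maxIndep_iff_maximalMatching H S').1 hS'
        obtain ⟨x, ⟨eE, heE, rfl⟩, hvx⟩ := hstr v hvS _ hmm
        exact ⟨eE, hvx, heE⟩
    · obtain ⟨a, b, c, hTeq, haS, hbS, hcS, hab, hbc, hac, hst⟩ := hTS T hTTS
      constructor
      · -- triangle is a clique
        intro e he f hf hne
        refine (lineGraph_adj_iff H e f).2 ⟨hne, ?_⟩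
        by_contra hno
        push_neg at hno
        obtain ⟨u1, v1, h1, he1⟩ := edge_repr H e e.2
        obtain ⟨u2, v2, h2, hf1⟩ := edge_repr H f f.2
        have hu1 : u1 ∈ T := he u1 (by rw [he1]; exact Sym2.mem_mk_left _ _)
        have hv1 : v1 ∈ T := he v1 (by rw [he1]; exact Sym2.mem_mk_right _ _)
        have hu2 : u2 ∈ T := hf u2 (by rw [hf1]; exact Sym2.mem_mk_left _ _)
        have hv2 : v2 ∈ T := hf v2 (by rw [hf1]; exact Sym2.mem_mk_right _ _)
        have h12 : ¬ (u1 = u2 ∨ u1 = v2) := by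
          intro h
          exact hno u1 (by rw [he1]; exact Sym2.mem_mk_left _ _)
            (by rw [hf1]; exact Sym2.mem_iff.2 h)
        have h12' : ¬ (v1 = u2 ∨ v1 = v2) := by
          intro h
          exact hno v1 (by rw [he1]; exact Sym2.mem_mk_right _ _)
            (by rw [hf1]; exact Sym2.mem_iff.2 h)
        push_neg at h12 h12'
        have hne1 : u1 ≠ v1 := h1.ne
        have hne2 : u2 ≠ v2 := h2.ne
        rw [hTeq] at hu1 hv1 hu2 hv2
        simp only [Set.mem_insert_iff, Set.mem_singleton_iff] at hu1 hv1 hu2 hv2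
        exact pigeon hu1 hv1 hu2 hv2 hne1 hne2 h12.1 h12.2 h12'.1 h12'.2
      · -- triangle is strong
        intro S' hS'
        have hmm : IsMaximalMatching H (Subtype.val '' S') :=
          (maxIndep_iff_maximalMatching H S').1 hS'
        obtain ⟨x, hxM, hx⟩ := hst _ hmm
        obtain ⟨eE, heE, rfl⟩ := hxM
        refine ⟨eE, ?_, heE⟩
        intro y hy
        rw [hTeq]
        simp only [Set.mem_insert_iff, Set.mem_singleton_iff]
        rcases hx with h|h|h <;> rw [h] at hy <;>
          rcases Sym2.mem_iff.1 hy with h'|h' <;> tauto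
  · -- partition
    intro eE
    obtain ⟨u, v, hadj, heEeq⟩ := edge_repr H (eE : Sym2 V) eE.2
    have hueE : u ∈ (eE : Sym2 V) := by rw [heEeq]; exact Sym2.mem_mk_left _ _
    have hveE : v ∈ (eE : Sym2 V) := by rw [heEeq]; exact Sym2.mem_mk_right _ _
    have hmemT : ∀ T : Set V, T ∈ TS → eE ∈ tri T → (∀ x ∈ T, x ∉ S) := by
      intro T hTTS heET x hxT
      obtain ⟨a, b, c, hTeq, haS, hbS, hcS, -⟩ := hTS T hTTS
      rw [hTeq] at hxT
      rcases hxT with h|h|h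
      · exact h ▸ haS
      · exact h ▸ hbS
      · exact h ▸ hcS
    by_cases huS : u ∈ S
    · have hvS : v ∉ S := fun hvS => hind u huS v hvS hadj
      refine ⟨star u, ⟨Or.inl ⟨u, huS, rfl⟩, hueE⟩, ?_⟩
      rintro K ⟨(⟨w, hwS, rfl⟩ | ⟨T, hTTS, rfl⟩), heEK⟩
      · have hweE : w ∈ (eE : Sym2 V) := heEK
        rw [heEeq] at hweE
        rcases Sym2.mem_iff.1 hweE with h|h
        · rw [h]
        · exact absurd (h ▸ hwS) hvS
      · exact absurd huS (hmemT T hTTS heEK u (heEK u hueE))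
    · by_cases hvS : v ∈ S
      · refine ⟨star v, ⟨Or.inl ⟨v, hvS, rfl⟩, hveE⟩, ?_⟩
        rintro K ⟨(⟨w, hwS, rfl⟩ | ⟨T, hTTS, rfl⟩), heEK⟩
        · have hweE : w ∈ (eE : Sym2 V) := heEK
          rw [heEeq] at hweE
          rcases Sym2.mem_iff.1 hweE with h|h
          · exact absurd (h ▸ hwS) huS
          · rw [h]
        · exact absurd hvS (hmemT T hTTS heEK v (heEK v hveE))
      · obtain ⟨T, ⟨hTTS, huT, hvT⟩, hTuniq⟩ := hdec u v hadj huS hvS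
        have heET : eE ∈ tri T := by
          intro x hx
          rw [heEeq] at hx
          rcases Sym2.mem_iff.1 hx with h|h
          · exact h ▸ huT
          · exact h ▸ hvT
        refine ⟨tri T, ⟨Or.inr ⟨T, hTTS, rfl⟩, heET⟩, ?_⟩
        rintro K ⟨(⟨w, hwS, rfl⟩ | ⟨T', hTTS', rfl⟩), heEK⟩
        · have hweE : w ∈ (eE : Sym2 V) := heEK
          rw [heEeq] at hweE
          rcases Sym2.mem_iff.1 hweE with h|h
          · exact absurd (h ▸ hwS) huS
          · exact absurd (h ▸ hwS) hvS
        · rw [hTuniq T' ⟨hTTS', heEK u hueE, heEK v hveE⟩]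


theorem lineGraph_localizable_iff (H : SimpleGraph V) :
    LocalizableSet H.lineGraph ↔
      ∃ S : Set V,
        (∀ u ∈ S, ∀ v ∈ S, ¬ H.Adj u v) ∧
        (∀ u ∈ S, StrongVertex H u) ∧
        ∃ TS : Set (Set V),
          (∀ T ∈ TS, ∃ a b c : V, T = {a, b, c} ∧
              a ∉ S ∧ b ∉ S ∧ c ∉ S ∧
              H.Adj a b ∧ H.Adj b c ∧ H.Adj a c ∧ StrongTriangle H a b c) ∧
          ∀ u v : V, H.Adj u v → u ∉ S → v ∉ S →
            ∃! T, T ∈ TS ∧ u ∈ T ∧ v ∈ T := by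
  constructor
  · exact forward H
  · rintro ⟨S, hind, hstr, TS, hTS, hdec⟩
    exact backward H S hind hstr TS hTS hdec
end

section
/- Let H be a connected graph not isomorphic to K4 or the diamond. Then any two strong triangles of H are edge-disjoint. -/
variable {V : Type*} [Fintype V] [DecidableEq V]

/-- The diamond: `K₄` minus one edge. -/
def diamondGraph : SimpleGraph (Fin 4) :=
  (⊤ : SimpleGraph (Fin 4)).deleteEdges {s((0 : Fin 4), (3 : Fin 4))}

set_option linter.unusedSectionVars false
set_option maxHeartbeats 1000000

lemma exists_maximal_ext (H : SimpleGraph V) (M : Set (Sym2 V)) (hM : IsMatching H M) :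
    ∃ N, IsMaximalMatching H N ∧ M ⊆ N := by
  obtain ⟨N, ⟨hN, hMN⟩, hmax⟩ :=
    Set.Finite.exists_maximalFor id {N | IsMatching H N ∧ M ⊆ N} (Set.toFinite _)
      ⟨M, hM, le_refl M⟩
  refine ⟨N, ⟨hN, fun M' hM' hNM' => ?_⟩, hMN⟩
  exact le_antisymm (hmax (j := M') ⟨hM', hMN.trans hNM'⟩ hNM') hNM'

lemma st_rot {H : SimpleGraph V} {a b c : V} (h : StrongTriangle H a b c) :
    StrongTriangle H b c a := by
  intro M hM
  obtain ⟨e, he, h'⟩ := h M hM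
  refine ⟨e, he, ?_⟩
  rcases h' with h' | h' | h' <;> rw [h'] <;> simp [Sym2.eq_swap]

lemma st_swap {H : SimpleGraph V} {a b c : V} (h : StrongTriangle H a b c) :
    StrongTriangle H a c b := by
  intro M hM
  obtain ⟨e, he, h'⟩ := h M hM
  refine ⟨e, he, ?_⟩
  rcases h' with h' | h' | h' <;> rw [h'] <;> simp [Sym2.eq_swap]

lemma not_strong (H : SimpleGraph V) (x y z : V) (M0 : Set (Sym2 V))
    (hM0 : IsMatching H M0)
    (hblock : ∀ e, (e = s(x,y) ∨ e = s(y,z) ∨ e = s(x,z)) →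
      e ∉ M0 ∧ ∃ f ∈ M0, ∃ u, u ∈ e ∧ u ∈ f)
    (hT : StrongTriangle H x y z) : False := by
  obtain ⟨N, hN, hsub⟩ := exists_maximal_ext H M0 hM0
  obtain ⟨e, heN, he⟩ := hT N hN
  obtain ⟨hnot, f, hf, u, hue, huf⟩ := hblock e he
  have hef : e ≠ f := fun h => hnot (h ▸ hf)
  exact hN.1.2 e heN f (hsub hf) hef u ⟨hue, huf⟩

lemma adj_out (H : SimpleGraph V) {S : Set V} : ∀ {v t : V}, H.Walk v t → v ∉ S → t ∈ S →
    ∃ u s, u ∉ S ∧ s ∈ S ∧ H.Adj u s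
  | _, _, .nil, hv, ht => absurd ht hv
  | _, _, .cons (v := m) h p, hv, ht => by
    by_cases hm : m ∈ S
    · exact ⟨_, _, hv, hm, h⟩
    · exact adj_out H p hm ht

lemma matching_pair (H : SimpleGraph V) {p q r t : V} (h1 : H.Adj p q) (h2 : H.Adj r t)
    (hpr : p ≠ r) (hpt : p ≠ t) (hqr : q ≠ r) (hqt : q ≠ t) :
    IsMatching H {s(p,q), s(r,t)} := by
  constructor
  · intro e he
    rcases he with rfl | rfl <;> simp [h1, h2]
  · intro e he f hf hef u hu
    obtain ⟨hu1, hu2⟩ := hu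
    rcases he with rfl | rfl <;> rcases hf with rfl | rfl <;>
      simp_all [Sym2.mem_iff] <;> aesop

lemma iso_case (H : SimpleGraph V) (x y z w : V)
    (hxy : H.Adj x y) (hyz : H.Adj y z) (hxz : H.Adj x z)
    (hyw : H.Adj y w) (hxw : H.Adj x w) (hzw : z ≠ w)
    (hall : ∀ u : V, u = x ∨ u = y ∨ u = z ∨ u = w) :
    Nonempty (H ≃g (⊤ : SimpleGraph (Fin 4))) ∨ Nonempty (H ≃g diamondGraph) := by
  have n1 : x ≠ y := hxy.ne
  have n2 : y ≠ z := hyz.ne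
  have n3 : x ≠ z := hxz.ne
  have n4 : y ≠ w := hyw.ne
  have n5 : x ≠ w := hxw.ne
  by_cases hA : H.Adj z w
  · left
    refine ⟨⟨⟨fun u => if u = x then 0 else if u = y then 1 else if u = z then 2 else 3,
      ![x, y, z, w], ?_, ?_⟩, ?_⟩⟩
    · intro u
      rcases hall u with rfl | rfl | rfl | rfl <;>
        simp [n1, n2, n3, n4, n5, hzw, n1.symm, n2.symm, n3.symm, n4.symm, n5.symm, hzw.symm]
    · intro i
      fin_cases i <;>
        simp [n1, n2, n3, n4, n5, hzw, n1.symm, n2.symm, n3.symm, n4.symm, n5.symm, hzw.symm]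
    · intro u v
      rcases hall u with rfl | rfl | rfl | rfl <;> rcases hall v with rfl | rfl | rfl | rfl <;>
        simp [n1, n2, n3, n4, n5, hzw, n1.symm, n2.symm, n3.symm, n4.symm, n5.symm, hzw.symm,
          hxy, hyz, hxz, hyw, hxw, hA, hxy.symm, hyz.symm, hxz.symm, hyw.symm, hxw.symm, hA.symm]
  · right
    have hA' : ¬ H.Adj w z := fun h => hA h.symm
    refine ⟨⟨⟨fun u => if u = z then 0 else if u = x then 1 else if u = y then 2 else 3,
      ![z, x, y, w], ?_, ?_⟩, ?_⟩⟩
    · intro u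
      rcases hall u with rfl | rfl | rfl | rfl <;>
        simp [n1, n2, n3, n4, n5, hzw, n1.symm, n2.symm, n3.symm, n4.symm, n5.symm, hzw.symm]
    · intro i
      fin_cases i <;>
        simp [n1, n2, n3, n4, n5, hzw, n1.symm, n2.symm, n3.symm, n4.symm, n5.symm, hzw.symm]
    · intro u v
      rcases hall u with rfl | rfl | rfl | rfl <;> rcases hall v with rfl | rfl | rfl | rfl <;>
        simp [diamondGraph, SimpleGraph.deleteEdges_adj, Sym2.eq_iff,
          n1, n2, n3, n4, n5, hzw, n1.symm, n2.symm, n3.symm, n4.symm, n5.symm, hzw.symm,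
          hxy, hyz, hxz, hyw, hxw, hA, hxy.symm, hyz.symm, hxz.symm, hyw.symm, hxw.symm, hA']

lemma key (H : SimpleGraph V) (hconn : H.Connected)
    (hK4 : ¬ Nonempty (H ≃g (⊤ : SimpleGraph (Fin 4))))
    (hdiamond : ¬ Nonempty (H ≃g diamondGraph))
    (x y z w : V) (hzw : z ≠ w)
    (hxy : H.Adj x y) (hyz : H.Adj y z) (hxz : H.Adj x z)
    (hyw : H.Adj y w) (hxw : H.Adj x w)
    (hT : StrongTriangle H x y z) (hT' : StrongTriangle H x y w) : False := by
  have n1 : x ≠ y := hxy.ne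
  have n2 : y ≠ z := hyz.ne
  have n3 : x ≠ z := hxz.ne
  have n4 : y ≠ w := hyw.ne
  have n5 : x ≠ w := hxw.ne
  have hout : ∃ v x0, v ∉ ({x, y, z, w} : Set V) ∧ x0 ∈ ({x, y, z, w} : Set V) ∧ H.Adj v x0 := by
    by_cases hall : ∀ u : V, u = x ∨ u = y ∨ u = z ∨ u = w
    · rcases iso_case H x y z w hxy hyz hxz hyw hxw hzw hall with h | h
      · exact absurd h hK4
      · exact absurd h hdiamond
    · push_neg at hall
      obtain ⟨v, hv1, hv2, hv3, hv4⟩ := hall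
      have hv : v ∉ ({x, y, z, w} : Set V) := by simp [hv1, hv2, hv3, hv4]
      exact adj_out H (hconn v x).some hv (by simp)
  obtain ⟨v, x0, hv, hx0, hadj⟩ := hout
  simp only [Set.mem_insert_iff, Set.mem_singleton_iff, not_or] at hv
  obtain ⟨hvx, hvy, hvz, hvw⟩ := hv
  simp only [Set.mem_insert_iff, Set.mem_singleton_iff] at hx0
  rcases hx0 with h0 | h0 | h0 | h0 <;> subst x0
  · -- adjacent to x : M0 = {s(v,x), s(y,w)}
    refine not_strong H x y z _ (matching_pair H hadj hyw hvy hvw n1 n5) ?_ hT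
    rintro e (rfl | rfl | rfl) <;>
      refine ⟨by simp [Sym2.eq_iff, hvx, hvy, hvz, hvw, n1, n2, n3, n4, n5, hzw,
        Ne.symm hvx, Ne.symm hvy, Ne.symm hvz, Ne.symm hvw,
        n1.symm, n2.symm, n3.symm, n4.symm, n5.symm, hzw.symm], ?_⟩
    · exact ⟨s(v,x), by simp, x, by simp, by simp⟩
    · exact ⟨s(y,w), by simp, y, by simp, by simp⟩
    · exact ⟨s(v,x), by simp, x, by simp, by simp⟩
  · -- adjacent to y : M0 = {s(v,y), s(x,w)}
    refine not_strong H x y z _ (matching_pair H hadj hxw hvx hvw n1.symm n4) ?_ hT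
    rintro e (rfl | rfl | rfl) <;>
      refine ⟨by simp [Sym2.eq_iff, hvx, hvy, hvz, hvw, n1, n2, n3, n4, n5, hzw,
        Ne.symm hvx, Ne.symm hvy, Ne.symm hvz, Ne.symm hvw,
        n1.symm, n2.symm, n3.symm, n4.symm, n5.symm, hzw.symm], ?_⟩
    · exact ⟨s(v,y), by simp, y, by simp, by simp⟩
    · exact ⟨s(v,y), by simp, y, by simp, by simp⟩
    · exact ⟨s(x,w), by simp, x, by simp, by simp⟩
  · -- adjacent to z : M0 = {s(v,z), s(y,w)}
    refine not_strong H x y z _ (matching_pair H hadj hyw hvy hvw n2.symm hzw) ?_ hT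
    rintro e (rfl | rfl | rfl) <;>
      refine ⟨by simp [Sym2.eq_iff, hvx, hvy, hvz, hvw, n1, n2, n3, n4, n5, hzw,
        Ne.symm hvx, Ne.symm hvy, Ne.symm hvz, Ne.symm hvw,
        n1.symm, n2.symm, n3.symm, n4.symm, n5.symm, hzw.symm], ?_⟩
    · exact ⟨s(y,w), by simp, y, by simp, by simp⟩
    · exact ⟨s(v,z), by simp, z, by simp, by simp⟩
    · exact ⟨s(v,z), by simp, z, by simp, by simp⟩
  · -- adjacent to w : M0 = {s(v,w), s(y,z)}, kill triangle x y w
    refine not_strong H x y w _ (matching_pair H hadj hyz hvy hvz n4.symm hzw.symm) ?_ hT'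
    rintro e (rfl | rfl | rfl) <;>
      refine ⟨by simp [Sym2.eq_iff, hvx, hvy, hvz, hvw, n1, n2, n3, n4, n5, hzw,
        Ne.symm hvx, Ne.symm hvy, Ne.symm hvz, Ne.symm hvw,
        n1.symm, n2.symm, n3.symm, n4.symm, n5.symm, hzw.symm], ?_⟩
    · exact ⟨s(y,z), by simp, y, by simp, by simp⟩
    · exact ⟨s(v,w), by simp, w, by simp, by simp⟩
    · exact ⟨s(v,w), by simp, w, by simp, by simp⟩

lemma s3a (a b c : V) : ({a, b, c} : Set V) = {b, c, a} := by
  ext u; simp; tauto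

lemma s3b (a b c : V) : ({a, b, c} : Set V) = {a, c, b} := by
  ext u; simp; tauto

lemma main_aux (H : SimpleGraph V) (hconn : H.Connected)
    (hK4 : ¬ Nonempty (H ≃g (⊤ : SimpleGraph (Fin 4))))
    (hdiamond : ¬ Nonempty (H ≃g diamondGraph))
    {x y z x' y' z' : V}
    (hxy : H.Adj x y) (hyz : H.Adj y z) (hxz : H.Adj x z)
    (hxy' : H.Adj x' y') (hyz' : H.Adj y' z') (hxz' : H.Adj x' z')
    (hT : StrongTriangle H x y z) (hT' : StrongTriangle H x' y' z')
    (hset : ({x, y, z} : Set V) ≠ {x', y', z'})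
    (hsh : s(x, y) = s(x', y')) : False := by
  rw [Sym2.eq_iff] at hsh
  rcases hsh with ⟨rfl, rfl⟩ | ⟨rfl, rfl⟩
  · refine key H hconn hK4 hdiamond x y z z' ?_ hxy hyz hxz hyz' hxz' hT hT'
    rintro rfl; exact hset rfl
  · refine key H hconn hK4 hdiamond x y z z' ?_ hxy hyz hxz hxz' hyz'
      hT (st_swap (st_rot hT'))
    rintro rfl; exact hset (Set.insert_comm x y {z})


set_option maxHeartbeats 1000000 in
theorem strong_triangles_edge_disjoint (H : SimpleGraph V) (hconn : H.Connected)
    (hK4 : ¬ Nonempty (H ≃g (⊤ : SimpleGraph (Fin 4))))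
    (hdiamond : ¬ Nonempty (H ≃g diamondGraph))
    (a b c a' b' c' : V)
    (hab : H.Adj a b) (hbc : H.Adj b c) (hac : H.Adj a c)
    (hab' : H.Adj a' b') (hbc' : H.Adj b' c') (hac' : H.Adj a' c')
    (hT : StrongTriangle H a b c) (hT' : StrongTriangle H a' b' c')
    (hne : ({a, b, c} : Set V) ≠ {a', b', c'}) :
    ∀ e : Sym2 V, e ∈ ({s(a, b), s(b, c), s(a, c)} : Set (Sym2 V)) →
      e ∉ ({s(a', b'), s(b', c'), s(a', c')} : Set (Sym2 V)) := by
  intro e he he'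
  simp only [Set.mem_insert_iff, Set.mem_singleton_iff] at he he'
  have L2 := s3a a b c
  have L3 := s3b a b c
  have R2 := s3a a' b' c'
  have R3 := s3b a' b' c'
  rcases he with rfl | rfl | rfl <;> rcases he' with h' | h' | h'
  · exact main_aux H hconn hK4 hdiamond hab hbc hac hab' hbc' hac' hT hT' hne h'
  · exact main_aux H hconn hK4 hdiamond hab hbc hac hbc' hac'.symm hab'.symm hT (st_rot hT')
      (fun h => hne (h.trans R2.symm)) h'
  · exact main_aux H hconn hK4 hdiamond hab hbc hac hac' hbc'.symm hab' hT (st_swap hT')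
      (fun h => hne (h.trans R3.symm)) h'
  · exact main_aux H hconn hK4 hdiamond hbc hac.symm hab.symm hab' hbc' hac' (st_rot hT) hT'
      (fun h => hne (L2.trans h)) h'
  · exact main_aux H hconn hK4 hdiamond hbc hac.symm hab.symm hbc' hac'.symm hab'.symm
      (st_rot hT) (st_rot hT') (fun h => hne ((L2.trans h).trans R2.symm)) h'
  · exact main_aux H hconn hK4 hdiamond hbc hac.symm hab.symm hac' hbc'.symm hab'
      (st_rot hT) (st_swap hT') (fun h => hne ((L2.trans h).trans R3.symm)) h'
  · exact main_aux H hconn hK4 hdiamond hac hbc.symm hab hab' hbc' hac' (st_swap hT) hT'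
      (fun h => hne (L3.trans h)) h'
  · exact main_aux H hconn hK4 hdiamond hac hbc.symm hab hbc' hac'.symm hab'.symm
      (st_swap hT) (st_rot hT') (fun h => hne ((L3.trans h).trans R2.symm)) h'
  · exact main_aux H hconn hK4 hdiamond hac hbc.symm hab hac' hbc'.symm hab'
      (st_swap hT) (st_swap hT') (fun h => hne ((L3.trans h).trans R3.symm)) h'
end
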